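/- arXiv:0809.0550 — 7 statements merged into one kernel-verified Lean document; each statement's English description precedes it below -/
import Mathlib

section
/- Let Δ be a positive nonsquare integer. The map sending the form f = a·X² + 2·b·X·Y + c·Y² (with b² - a·c = Δ, a ≠ 0) to the real number ω(f) := (-b - √Δ)/a is equivariant for the SL(2,ℤ) actions: for M ∈ SL(2,ℤ), ω(f·M) = M⁻¹·ω(f), where f·M denotes the form obtained by substituting the linear change of variables given by M, and M⁻¹ acts by linear fractional transformation. -/
theorem omega_equivariant (Δ a b c p q r s : ℤ) (hΔpos : 0 < Δ) (hΔns : ¬ IsSquare Δ)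
    (ha : a ≠ 0) (hf : b ^ 2 - a * c = Δ) (hdet : p * s - q * r = 1)
    -- coefficients of f·M
    (a' b' c' : ℤ)
    (ha' : a' = a * p ^ 2 + 2 * b * p * r + c * r ^ 2)
    (hb' : b' = a * p * q + b * (p * s + q * r) + c * r * s)
    (hc' : c' = a * q ^ 2 + 2 * b * q * s + c * s ^ 2) :
    a' ≠ 0 ∧
      ((-b' : ℝ) - Real.sqrt Δ) / a' =
        ((s : ℝ) * ((-b - Real.sqrt Δ) / a) + (-q)) /
          ((-r : ℝ) * ((-b - Real.sqrt Δ) / a) + p) := by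
  have hirr : Irrational (Real.sqrt Δ) :=
    (irrational_sqrt_intCast_iff_of_nonneg hΔpos.le).2 hΔns
  have hsq : Real.sqrt Δ ^ 2 = (Δ : ℝ) := Real.sq_sqrt (by positivity)
  have haR : (a : ℝ) ≠ 0 := Int.cast_ne_zero.2 ha
  subst ha' hb' hc'
  -- a' ≠ 0
  have ha'0 : a * p ^ 2 + 2 * b * p * r + c * r ^ 2 ≠ 0 := by
    intro h0
    rcases eq_or_ne r 0 with hr | hr
    · subst hr
      have hp : p = 0 := by
        have := mul_eq_zero.1 (by linarith [h0] : a * p ^ 2 = 0)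
        rcases this with h | h
        · exact absurd h ha
        · exact pow_eq_zero_iff (two_ne_zero) |>.1 h
      subst hp; simp at hdet
    · apply hΔns
      have key : (a * p + b * r) ^ 2 = Δ * r ^ 2 := by
        linear_combination a * h0 + r ^ 2 * hf
      have hdvd : r ∣ a * p + b * r := by
        rw [← Int.pow_dvd_pow_iff two_ne_zero]
        exact ⟨Δ, by linarith [key]⟩
      obtain ⟨k, hk⟩ := hdvd
      refine ⟨k, ?_⟩
      have hr2 : r ^ 2 ≠ 0 := pow_ne_zero 2 hr
      have : Δ * r ^ 2 = (k * k) * r ^ 2 := by rw [← key, hk]; ring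
      exact mul_right_cancel₀ hr2 this
  have hA' : ((a * p ^ 2 + 2 * b * p * r + c * r ^ 2 : ℤ) : ℝ) ≠ 0 :=
    Int.cast_ne_zero.2 ha'0
  refine ⟨ha'0, ?_⟩
  -- p ≠ 0 when r = 0
  have hD : (-r : ℝ) * ((-b - Real.sqrt Δ) / a) + p ≠ 0 := by
    intro hD0
    rcases eq_or_ne r 0 with hr | hr
    · have hp : p ≠ 0 := by
        intro hp; subst hp hr; simp at hdet
      apply hp
      have h := hD0
      rw [hr] at h
      have : (p : ℝ) = 0 := by simpa using h
      exact_mod_cast this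
    · apply hirr
      refine ⟨(-(a * p + b * r) : ℚ) / (r : ℚ), ?_⟩
      have hrR : (r : ℝ) ≠ 0 := Int.cast_ne_zero.2 hr
      have : (r : ℝ) * Real.sqrt Δ = -(a * p + b * r) := by
        field_simp at hD0
        push_cast at hD0 ⊢
        linarith [hD0]
      push_cast
      field_simp
      linarith [this]
  have hfR : (b : ℝ) ^ 2 - a * c = Δ := by exact_mod_cast hf
  have hdetR : (p : ℝ) * s - q * r = 1 := by exact_mod_cast hdet
  rw [div_eq_div_iff hA' hD]
  push_cast
  field_simp
  linear_combination (-(r : ℝ)) * hsq +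
      (((a : ℝ) * p + b * r) * Real.sqrt Δ + r * Δ) * hdetR +
      ((r : ℝ) * (p * s - q * r)) * hfR
end

section
/- Let x be a real quadratic irrational. The stabilizer of x in PSL(2,ℤ) (= SL(2,ℤ)/{±1}) under the linear fractional action is an infinite cyclic group. -/
/-- Linear fractional action of `SL(2,ℤ)` on reals. -/
noncomputable def lfa (M : Matrix.SpecialLinearGroup (Fin 2) ℤ) (x : ℝ) : ℝ :=
  ((M.1 0 0 : ℝ) * x + (M.1 0 1 : ℝ)) / ((M.1 1 0 : ℝ) * x + (M.1 1 1 : ℝ))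

namespace StabAux

abbrev SL2 := Matrix.SpecialLinearGroup (Fin 2) ℤ

/-- The "denominator" cocycle value, equal to the eigenvalue of `N` with eigenvector `(x,1)`
when `N` fixes `x`. -/
noncomputable def psi (N : SL2) (x : ℝ) : ℝ := (N.1 1 0 : ℝ) * x + N.1 1 1

variable {x : ℝ}

lemma lin (hx : Irrational x) {r s : ℤ} (h : (r : ℝ) * x + s = 0) : r = 0 ∧ s = 0 := by
  by_cases hr : r = 0
  · subst hr; simp at h; exact ⟨rfl, by exact_mod_cast h⟩
  · exfalso
    apply hx
    refine ⟨(-s : ℚ) / (r : ℚ), ?_⟩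
    have hr' : (r : ℝ) ≠ 0 := Int.cast_ne_zero.mpr hr
    push_cast
    field_simp
    linarith

lemma lin' (hx : Irrational x) {r s r' s' : ℤ}
    (h : (r : ℝ) * x + s = (r' : ℝ) * x + s') : r = r' ∧ s = s' := by
  have : ((r - r' : ℤ) : ℝ) * x + ((s - s' : ℤ) : ℝ) = 0 := by push_cast; linarith
  obtain ⟨h1, h2⟩ := lin hx this
  omega

lemma det_eq (N : SL2) : N.1 0 0 * N.1 1 1 - N.1 0 1 * N.1 1 0 = 1 := by
  have := N.2
  rwa [Matrix.det_fin_two] at this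

lemma psi_ne_zero (hx : Irrational x) (N : SL2) : psi N x ≠ 0 := by
  intro h
  obtain ⟨h1, h2⟩ := lin hx h
  have := det_eq N
  rw [h1, h2] at this
  simp at this

lemma lfa_eq_iff (hx : Irrational x) (N : SL2) :
    lfa N x = x ↔
      (N.1 1 0 : ℝ) * x ^ 2 + ((N.1 1 1 : ℝ) - N.1 0 0) * x - N.1 0 1 = 0 := by
  have hd : ((N.1 1 0 : ℝ) * x + N.1 1 1) ≠ 0 := psi_ne_zero hx N
  rw [lfa, div_eq_iff hd]
  constructor <;> intro h <;> nlinarith [h]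

lemma num_eq (hx : Irrational x) {N : SL2} (h : lfa N x = x) :
    (N.1 0 0 : ℝ) * x + N.1 0 1 = x * psi N x := by
  have hd : ((N.1 1 0 : ℝ) * x + N.1 1 1) ≠ 0 := psi_ne_zero hx N
  rw [lfa, div_eq_iff hd] at h
  exact h

lemma mul_entry (M N : SL2) (i j : Fin 2) :
    ((M * N).1 i j : ℤ) = M.1 i 0 * N.1 0 j + M.1 i 1 * N.1 1 j := by
  simp [Matrix.SpecialLinearGroup.coe_mul, Matrix.mul_apply, Fin.sum_univ_two]

lemma psi_mul (hx : Irrational x) (M : SL2) {N : SL2} (hN : lfa N x = x) :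
    psi (M * N) x = psi M x * psi N x := by
  have h1 := num_eq hx hN
  have e0 := mul_entry M N 1 0
  have e1 := mul_entry M N 1 1
  unfold psi at *
  push_cast [e0, e1]
  push_cast at h1
  linear_combination ((M.1 1 0 : ℝ)) * h1

lemma lfa_mul (hx : Irrational x) (M : SL2) {N : SL2} (hN : lfa N x = x) :
    lfa (M * N) x = lfa M x := by
  have h1 := num_eq hx hN
  have e0 := mul_entry M N 0 0
  have e1 := mul_entry M N 0 1
  have hpsi := psi_mul hx M hN
  have hN0 := psi_ne_zero hx N
  rw [lfa, lfa]
  have hnum : ((M * N).1 0 0 : ℝ) * x + (M * N).1 0 1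
      = ((M.1 0 0 : ℝ) * x + M.1 0 1) * psi N x := by
    push_cast [e0, e1]
    unfold psi at *
    push_cast at h1
    linear_combination ((M.1 0 0 : ℝ)) * h1
  have hden : ((M * N).1 1 0 : ℝ) * x + (M * N).1 1 1 = psi (M*N) x := rfl
  have hdenM : ((M.1 1 0 : ℝ) * x + M.1 1 1) = psi M x := rfl
  rw [hnum, hden, hpsi, hdenM, mul_div_mul_right _ _ hN0]

lemma lfa_one : lfa (1 : SL2) x = x := by
  simp [lfa, Matrix.SpecialLinearGroup.coe_one]

lemma lfa_inv (hx : Irrational x) {N : SL2} (hN : lfa N x = x) : lfa N⁻¹ x = x := by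
  rw [lfa_eq_iff hx] at hN ⊢
  rw [Matrix.SpecialLinearGroup.SL2_inv_expl N]
  simp only [Matrix.cons_val', Matrix.cons_val_zero, Matrix.cons_val_one, Matrix.head_cons,
    Matrix.head_fin_const, Matrix.cons_val_fin_one, Int.cast_neg]
  push_cast
  linarith

lemma lfa_neg (N : SL2) : lfa (-N) x = lfa N x := by
  rw [lfa, lfa]
  simp only [Matrix.SpecialLinearGroup.coe_neg, Matrix.neg_apply, Int.cast_neg]
  rw [← neg_div_neg_eq]
  ring_nf

lemma psi_neg (N : SL2) : psi (-N) x = -psi N x := by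
  unfold psi
  simp only [Matrix.SpecialLinearGroup.coe_neg, Matrix.neg_apply, Int.cast_neg]
  ring


/-- The stabilizer of `x` in `SL(2,ℤ)`. -/
def St (x : ℝ) (hx : Irrational x) : Subgroup SL2 where
  carrier := {N | lfa N x = x}
  one_mem' := lfa_one
  mul_mem' := by
    intro M N hM hN
    exact (lfa_mul hx M hN).trans hM
  inv_mem' := by
    intro N hN
    exact lfa_inv hx hN

/-- The eigenvalue homomorphism from the stabilizer to `ℝˣ`. -/
noncomputable def Psi (x : ℝ) (hx : Irrational x) : St x hx →* ℝˣ where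
  toFun N := Units.mk0 (psi N.1 x) (psi_ne_zero hx N.1)
  map_one' := by
    ext
    simp [psi, Matrix.SpecialLinearGroup.coe_one]
  map_mul' := by
    intro M N
    ext
    exact psi_mul hx M.1 N.2

lemma psi_zpow (hx : Irrational x) {M : SL2} (hM : lfa M x = x) (k : ℤ) :
    psi (M ^ k) x = psi M x ^ k := by
  have hMm : M ∈ St x hx := hM
  have h := map_zpow (Psi x hx) ⟨M, hMm⟩ k
  have hcoe : ((⟨M, hMm⟩ ^ k : St x hx) : SL2) = M ^ k :=
    SubgroupClass.coe_zpow (⟨M, hMm⟩ : St x hx) k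
  have := congrArg Units.val h
  rw [Units.val_zpow_eq_zpow_val] at this
  simpa [Psi, hcoe] using this

lemma zpow_mem_st (hx : Irrational x) {M : SL2} (hM : lfa M x = x) (k : ℤ) :
    lfa (M ^ k) x = x := by
  have hMm : M ∈ St x hx := hM
  exact (St x hx).zpow_mem hMm k

section Structural

variable {a b c : ℤ}

/-- The linear relations satisfied by entries of stabilizer elements. -/
lemma rel (hx : Irrational x) (ha : a ≠ 0)
    (hroot : (a : ℝ) * x ^ 2 + b * x + c = 0) {N : SL2} (hN : lfa N x = x) :
    a * (N.1 1 1 - N.1 0 0) = N.1 1 0 * b ∧ a * N.1 0 1 = -(N.1 1 0 * c) := by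
  rw [lfa_eq_iff hx] at hN
  have key : ((a * (N.1 1 1 - N.1 0 0) - N.1 1 0 * b : ℤ) : ℝ) * x
      + ((-(a * N.1 0 1) - N.1 1 0 * c : ℤ) : ℝ) = 0 := by
    push_cast
    linear_combination (a : ℝ) * hN - (N.1 1 0 : ℝ) * hroot
  obtain ⟨h1, h2⟩ := lin hx key
  omega

lemma psi_inj (hx : Irrational x) (ha : a ≠ 0)
    (hroot : (a : ℝ) * x ^ 2 + b * x + c = 0) {N N' : SL2}
    (hN : lfa N x = x) (hN' : lfa N' x = x) (h : psi N x = psi N' x) : N = N' := by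
  obtain ⟨hr, hs⟩ := lin' hx h
  obtain ⟨h1, h2⟩ := rel hx ha hroot hN
  obtain ⟨h1', h2'⟩ := rel hx ha hroot hN'
  rw [hr, hs] at h1
  rw [hr] at h2
  have hp : N.1 0 0 = N'.1 0 0 := by
    have e : a * (N'.1 1 1 - N.1 0 0) = a * (N'.1 1 1 - N'.1 0 0) := by rw [h1, h1']
    have := mul_left_cancel₀ ha e
    omega
  have hq : N.1 0 1 = N'.1 0 1 := by
    have e : a * N.1 0 1 = a * N'.1 0 1 := by rw [h2, h2']
    exact mul_left_cancel₀ ha e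
  ext i j
  fin_cases i <;> fin_cases j <;> assumption

/-- The product of the eigenvalue at `x` and the eigenvalue at the conjugate root is 1. -/
lemma psi_conj_prod (hx : Irrational x) (ha : a ≠ 0)
    (hroot : (a : ℝ) * x ^ 2 + b * x + c = 0) {N : SL2} (hN : lfa N x = x) :
    psi N x * ((N.1 1 0 : ℝ) * (-(b : ℝ) / a - x) + N.1 1 1) = 1 := by
  obtain ⟨h1, h2⟩ := rel hx ha hroot hN
  have hdet := det_eq N
  have ha' : (a : ℝ) ≠ 0 := Int.cast_ne_zero.mpr ha
  have h1' : (a : ℝ) * ((N.1 1 1 : ℝ) - N.1 0 0) = (N.1 1 0 : ℝ) * b := by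
    exact_mod_cast h1
  have h2' : (a : ℝ) * N.1 0 1 = -((N.1 1 0 : ℝ) * c) := by exact_mod_cast h2
  have hdet' : (N.1 0 0 : ℝ) * N.1 1 1 - (N.1 0 1 : ℝ) * N.1 1 0 = 1 := by
    exact_mod_cast hdet
  unfold psi
  field_simp
  linear_combination (-(N.1 1 0 : ℝ) ^ 2) * hroot + (N.1 1 1 : ℝ) * h1'
    + (N.1 1 0 : ℝ) * h2' + (a : ℝ) * hdet' 


lemma psi_one : psi (1 : SL2) x = 1 := by
  simp [psi, Matrix.SpecialLinearGroup.coe_one]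

lemma psi_inv (hx : Irrational x) {N : SL2} (hN : lfa N x = x) :
    psi N⁻¹ x = (psi N x)⁻¹ := by
  have h : psi (N⁻¹ * N) x = psi N⁻¹ x * psi N x := psi_mul hx N⁻¹ hN
  rw [inv_mul_cancel, psi_one] at h
  exact eq_inv_of_mul_eq_one_left h.symm

/-- There is a stabilizer element whose eigenvalue is not `±1` (via Pell's equation). -/
lemma exists_nontrivial (hx : Irrational x) (ha : a ≠ 0)
    (hroot : (a : ℝ) * x ^ 2 + b * x + c = 0) :
    ∃ M : SL2, lfa M x = x ∧ psi M x ≠ 1 ∧ psi M x ≠ -1 := by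
  set D : ℤ := b ^ 2 - 4 * a * c with hD_def
  have hD : ((D : ℤ) : ℝ) = (2 * a * x + b) ^ 2 := by
    rw [hD_def]
    push_cast
    linear_combination (-4 * (a : ℝ)) * hroot
  have ha2 : (2 * a : ℤ) ≠ 0 := by omega
  have hD0 : 0 < D := by
    rcases lt_trichotomy D 0 with h | h | h
    · exfalso
      have : ((D : ℤ) : ℝ) < 0 := by exact_mod_cast h
      nlinarith [sq_nonneg (2 * (a : ℝ) * x + b)]
    · exfalso
      have h0 : (2 * (a : ℝ) * x + b) ^ 2 = 0 := by rw [← hD, h]; norm_num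
      have h1 : ((2 * a : ℤ) : ℝ) * x + (b : ℤ) = 0 := by
        have := pow_eq_zero_iff (n := 2) (by norm_num) |>.mp h0
        push_cast
        linarith
      exact ha2 (lin hx h1).1
    · exact h
  have hnsq : ¬IsSquare D := by
    rintro ⟨e, he⟩
    have he' : ((D : ℤ) : ℝ) = (e : ℝ) ^ 2 := by rw [he]; push_cast; ring
    have hfac : (2 * (a : ℝ) * x + b - e) * (2 * (a : ℝ) * x + b + e) = 0 := by
      nlinarith [hD, he']
    rcases mul_eq_zero.mp hfac with h | h
    · have h1 : ((2 * a : ℤ) : ℝ) * x + ((b - e : ℤ) : ℝ) = 0 := by push_cast; linarith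
      exact ha2 (lin hx h1).1
    · have h1 : ((2 * a : ℤ) : ℝ) * x + ((b + e : ℤ) : ℝ) = 0 := by push_cast; linarith
      exact ha2 (lin hx h1).1
  obtain ⟨p, q, hpell, hq⟩ := Pell.exists_of_not_isSquare hD0 hnsq
  refine ⟨⟨!![p - b * q, -(2 * c * q); 2 * a * q, p + b * q], by
    rw [Matrix.det_fin_two_of]; linear_combination hpell⟩, ?_, ?_, ?_⟩
  · apply (lfa_eq_iff hx _).mpr
    show ((2 * a * q : ℤ) : ℝ) * x ^ 2 + (((p + b * q : ℤ) : ℝ) - ((p - b * q : ℤ) : ℝ)) * x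
      - ((-(2 * c * q) : ℤ) : ℝ) = 0
    push_cast
    linear_combination (2 * (q : ℝ)) * hroot
  · intro h
    have h1 : ((2 * a * q : ℤ) : ℝ) * x + ((p + b * q - 1 : ℤ) : ℝ) = 0 := by
      have : ((2 * a * q : ℤ) : ℝ) * x + ((p + b * q : ℤ) : ℝ) = 1 := h
      push_cast at this ⊢
      linarith
    exact mul_ne_zero (mul_ne_zero two_ne_zero ha) hq (lin hx h1).1
  · intro h
    have h1 : ((2 * a * q : ℤ) : ℝ) * x + ((p + b * q + 1 : ℤ) : ℝ) = 0 := by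
      have : ((2 * a * q : ℤ) : ℝ) * x + ((p + b * q : ℤ) : ℝ) = -1 := h
      push_cast at this ⊢
      linarith
    exact mul_ne_zero (mul_ne_zero two_ne_zero ha) hq (lin hx h1).1


/-- There is a stabilizer element of minimal eigenvalue `> 1`. -/
lemma exists_min (hx : Irrational x) (ha : a ≠ 0)
    (hroot : (a : ℝ) * x ^ 2 + b * x + c = 0) :
    ∃ M₀ : SL2, lfa M₀ x = x ∧ 1 < psi M₀ x ∧
      ∀ N : SL2, lfa N x = x → 1 < psi N x → psi M₀ x ≤ psi N x := by
  classical
  -- first, get some element with eigenvalue of absolute value > 1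
  obtain ⟨M, hMfix, hM1, hM1'⟩ := exists_nontrivial hx ha hroot
  have habs : |psi M x| ≠ 1 := by
    intro h
    rcases abs_eq (by norm_num : (0:ℝ) ≤ 1) |>.mp h with h | h
    exacts [hM1 h, hM1' h]
  have hMne : psi M x ≠ 0 := psi_ne_zero hx M
  have hexists : ∃ N : SL2, lfa N x = x ∧ 1 < psi N x := by
    rcases lt_or_gt_of_ne habs with hlt | hgt
    · -- |psi M x| < 1, use M⁻¹ (or its negative)
      have h0 : 0 < |psi M x| := abs_pos.mpr hMne
      have hinv : 1 < |psi M⁻¹ x| := by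
        rw [psi_inv hx hMfix, abs_inv]
        rw [lt_inv_comm₀] <;> [skip; norm_num; exact h0]
        simpa using hlt
      rcases abs_cases (psi M⁻¹ x) with ⟨he, _⟩ | ⟨he, _⟩
      · exact ⟨M⁻¹, lfa_inv hx hMfix, by rwa [he] at hinv⟩
      · refine ⟨-M⁻¹, by rw [lfa_neg]; exact lfa_inv hx hMfix, ?_⟩
        rw [psi_neg]
        rw [he] at hinv
        linarith
    · rcases abs_cases (psi M x) with ⟨he, _⟩ | ⟨he, _⟩
      · exact ⟨M, hMfix, by rwa [he] at hgt⟩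
      · refine ⟨-M, by rw [lfa_neg]; exact hMfix, ?_⟩
        rw [psi_neg]
        rw [he] at hgt
        linarith
  obtain ⟨Ns, hNsfix, hNs⟩ := hexists
  set Λ : ℝ := psi Ns x with hΛ_def
  -- conjugate root
  set y : ℝ := -(b : ℝ) / a - x with hy_def
  have hxy : x ≠ y := by
    intro h
    have h1 : ((2 * a : ℤ) : ℝ) * x + (b : ℤ) = 0 := by
      have ha' : (a : ℝ) ≠ 0 := Int.cast_ne_zero.mpr ha
      rw [hy_def] at h
      push_cast
      field_simp at h
      linarith
    have : (2 * a : ℤ) ≠ 0 := by omega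
    exact this (lin hx h1).1
  have hxy' : 0 < |x - y| := by
    rw [abs_pos, sub_ne_zero]; exact hxy
  -- bound on entries
  set B : ℤ := ⌈(Λ + 1) / |x - y|⌉ + ⌈Λ + ((Λ + 1) / |x - y|) * |x|⌉ + 1 with hB_def
  have key : ∀ N : SL2, lfa N x = x → 1 < psi N x → psi N x ≤ Λ →
      |N.1 1 0| ≤ B ∧ |N.1 1 1| ≤ B := by
    intro N hNfix h1 h2
    have hprod := psi_conj_prod hx ha hroot hNfix
    set r : ℤ := N.1 1 0
    set s : ℤ := N.1 1 1
    set φ : ℝ := (r : ℝ) * y + s with hφ_def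
    have hφpos : 0 < φ := by
      rcases lt_trichotomy φ 0 with h | h | h
      · nlinarith
      · exfalso; rw [h, mul_zero] at hprod; norm_num at hprod
      · exact h
    have hφlt : φ < 1 := by nlinarith
    have hr : |(r : ℝ)| ≤ (Λ + 1) / |x - y| := by
      rw [le_div_iff₀ hxy']
      have : (r : ℝ) * (x - y) = psi N x - φ := by
        rw [hφ_def]; unfold psi; push_cast; ring
      calc |(r : ℝ)| * |x - y| = |(r : ℝ) * (x - y)| := (abs_mul _ _).symm
        _ = |psi N x - φ| := by rw [this]
        _ ≤ Λ + 1 := by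
            rw [abs_le]
            constructor <;> nlinarith
    have hs : |(s : ℝ)| ≤ Λ + ((Λ + 1) / |x - y|) * |x| := by
      have : (s : ℝ) = psi N x - r * x := by unfold psi; push_cast; ring
      rw [this]
      have h3 : |psi N x - (r : ℝ) * x| ≤ |psi N x| + |(r : ℝ) * x| := abs_sub _ _
      have h4 : |psi N x| ≤ Λ := by rw [abs_le]; constructor <;> nlinarith
      have h5 : |(r : ℝ) * x| ≤ ((Λ + 1) / |x - y|) * |x| := by
        rw [abs_mul]
        exact mul_le_mul_of_nonneg_right hr (abs_nonneg x)
      linarith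
    constructor
    · have : ((|r| : ℤ) : ℝ) ≤ ((⌈(Λ + 1) / |x - y|⌉ : ℤ) : ℝ) := by
        rw [Int.cast_abs]
        exact hr.trans (Int.le_ceil _)
      have h6 : |r| ≤ ⌈(Λ + 1) / |x - y|⌉ := by exact_mod_cast this
      have h7 : (0:ℤ) ≤ ⌈Λ + ((Λ + 1) / |x - y|) * |x|⌉ := by
        have : (0:ℝ) ≤ Λ + ((Λ + 1) / |x - y|) * |x| := by
          have := abs_nonneg ((s : ℝ))
          linarith [hs]
        exact_mod_cast Int.ceil_nonneg this
      omega
    · have : ((|s| : ℤ) : ℝ) ≤ ((⌈Λ + ((Λ + 1) / |x - y|) * |x|⌉ : ℤ) : ℝ) := by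
        rw [Int.cast_abs]
        exact hs.trans (Int.le_ceil _)
      have h6 : |s| ≤ ⌈Λ + ((Λ + 1) / |x - y|) * |x|⌉ := by exact_mod_cast this
      have h7 : (0:ℤ) ≤ ⌈(Λ + 1) / |x - y|⌉ := by
        have : (0:ℝ) ≤ (Λ + 1) / |x - y| := le_trans (abs_nonneg _) hr
        exact_mod_cast Int.ceil_nonneg this
      omega
  -- the set of eigenvalues in (1, Λ] is finite
  set T : Set ℝ := {t : ℝ | (1 < t ∧ t ≤ Λ) ∧ ∃ N : SL2, lfa N x = x ∧ psi N x = t}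
    with hT_def
  have hTsub : T ⊆ (fun p : ℤ × ℤ => (p.1 : ℝ) * x + p.2) ''
      (Set.Icc (-B, -B) (B, B)) := by
    rintro t ⟨⟨h1, h2⟩, N, hNfix, hNt⟩
    obtain ⟨hr, hs⟩ := key N hNfix (hNt ▸ h1) (hNt ▸ h2)
    have hr' := abs_le.mp hr
    have hs' := abs_le.mp hs
    refine ⟨(N.1 1 0, N.1 1 1), ?_, hNt⟩
    rw [Set.mem_Icc]
    exact ⟨⟨hr'.1, hs'.1⟩, ⟨hr'.2, hs'.2⟩⟩
  have hTfin : T.Finite := Set.Finite.subset ((Set.finite_Icc _ _).image _) hTsub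
  have hTne : T.Nonempty := ⟨Λ, ⟨hNs, le_refl _⟩, Ns, hNsfix, rfl⟩
  obtain ⟨m, hmT, hmmin⟩ := Set.exists_min_image T id hTfin hTne
  obtain ⟨⟨hm1, hm2⟩, N₀, hN₀fix, hN₀m⟩ := hmT
  refine ⟨N₀, hN₀fix, by rwa [hN₀m], ?_⟩
  intro N hNfix h1
  rw [hN₀m]
  rcases le_or_gt (psi N x) Λ with h2 | h2
  · exact hmmin (psi N x) ⟨⟨h1, h2⟩, N, hNfix, rfl⟩
  · linarith

end Structural

end StabAux

/-- The stabilizer of a real quadratic irrational `x` in `PSL(2,ℤ)` is infinite cyclic: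
there is `M` fixing `x` whose class mod `±1` has infinite order and generates
the stabilizer mod `±1`. -/
theorem stabilizer_infinite_cyclic (x : ℝ) (hx : Irrational x)
    (a b c : ℤ) (ha : a ≠ 0) (hroot : (a : ℝ) * x ^ 2 + b * x + c = 0) :
    ∃ M : Matrix.SpecialLinearGroup (Fin 2) ℤ, lfa M x = x ∧
      (∀ k : ℤ, k ≠ 0 → M ^ k ≠ 1 ∧ M ^ k ≠ -1) ∧
      (∀ N : Matrix.SpecialLinearGroup (Fin 2) ℤ, lfa N x = x →
        ∃ k : ℤ, N = M ^ k ∨ N = -(M ^ k)) := by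
  obtain ⟨M₀, hfix, hlam, hmin⟩ := StabAux.exists_min hx ha hroot
  set lam := StabAux.psi M₀ x with hlamdef
  have hlampos : (0 : ℝ) < lam := lt_trans one_pos hlam
  have hsm := zpow_right_strictMono₀ hlam
  have hpsi_negone : StabAux.psi (-1 : StabAux.SL2) x = -1 := by
    rw [StabAux.psi_neg, StabAux.psi_one]
  have hlfa_negone : lfa (-1 : StabAux.SL2) x = x := by
    rw [StabAux.lfa_neg]; exact StabAux.lfa_one
  refine ⟨M₀, hfix, ?_, ?_⟩
  · intro k hk
    have hzp := StabAux.psi_zpow hx hfix k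
    constructor
    · intro h
      rw [h, StabAux.psi_one] at hzp
      have : lam ^ k ≠ lam ^ (0 : ℤ) := fun he => hk (hsm.injective he)
      rw [zpow_zero] at this
      exact this hzp.symm
    · intro h
      rw [h, hpsi_negone] at hzp
      have : (0 : ℝ) < lam ^ k := zpow_pos hlampos k
      rw [← hzp] at this
      linarith
  · intro N hN
    have hNne : StabAux.psi N x ≠ 0 := StabAux.psi_ne_zero hx N
    have hμ : 0 < |StabAux.psi N x| := abs_pos.mpr hNne
    obtain ⟨k, hk1, hk2⟩ := exists_mem_Ico_zpow hμ hlam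
    refine ⟨k, ?_⟩
    have hPk : lfa (M₀ ^ k) x = x := StabAux.zpow_mem_st hx hfix k
    have hPkinv : lfa (M₀ ^ k)⁻¹ x = x := StabAux.lfa_inv hx hPk
    have hN' : lfa (N * (M₀ ^ k)⁻¹) x = x := by
      rw [StabAux.lfa_mul hx N hPkinv]; exact hN
    have hzk : (0 : ℝ) < lam ^ k := zpow_pos hlampos k
    have hψ : StabAux.psi (N * (M₀ ^ k)⁻¹) x = StabAux.psi N x * (lam ^ k)⁻¹ := by
      rw [StabAux.psi_mul hx N hPkinv, StabAux.psi_inv hx hPk, StabAux.psi_zpow hx hfix k]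
    set ν := StabAux.psi (N * (M₀ ^ k)⁻¹) x with hν
    have habsν : |ν| = |StabAux.psi N x| / lam ^ k := by
      rw [hψ, abs_mul, abs_inv, abs_of_pos hzk, div_eq_mul_inv]
    have h1 : 1 ≤ |ν| := by
      rw [habsν, le_div_iff₀ hzk, one_mul]; exact hk1
    have h2 : |ν| < lam := by
      rw [habsν, div_lt_iff₀ hzk]
      calc |StabAux.psi N x| < lam ^ (k + 1) := hk2
        _ = lam * lam ^ k := by rw [zpow_add_one₀ (ne_of_gt hlampos)]; ring
    have habs1 : |ν| = 1 := by
      by_contra hne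
      have hgt : 1 < |ν| := lt_of_le_of_ne h1 (Ne.symm hne)
      rcases abs_cases ν with ⟨he, _⟩ | ⟨he, _⟩
      · have h3 : 1 < ν := by rw [← he]; exact hgt
        have h4 := hmin _ hN' (by rw [← hν]; exact h3)
        rw [← hν] at h4
        linarith
      · have h3 : 1 < -ν := by rw [← he]; exact hgt
        have hnfix : lfa (-(N * (M₀ ^ k)⁻¹)) x = x := by
          rw [StabAux.lfa_neg]; exact hN'
        have hpn : StabAux.psi (-(N * (M₀ ^ k)⁻¹)) x = -ν := StabAux.psi_neg _
        have h4 := hmin _ hnfix (by rw [hpn]; exact h3)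
        rw [hpn] at h4
        linarith
    rcases (abs_eq (by norm_num : (0:ℝ) ≤ 1)).mp habs1 with he | he
    · left
      have heq : N * (M₀ ^ k)⁻¹ = 1 := by
        apply StabAux.psi_inj hx ha hroot hN' StabAux.lfa_one
        rw [← hν, he, StabAux.psi_one]
      have := mul_inv_eq_one.mp heq
      exact this
    · right
      have heq : N * (M₀ ^ k)⁻¹ = -1 := by
        apply StabAux.psi_inj hx ha hroot hN' hlfa_negone
        rw [← hν, he, hpsi_negone]
      have := mul_inv_eq_iff_eq_mul.mp heq
      rw [neg_one_mul] at this
      exact this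
end

section
/- Let Δ be a positive nonsquare integer and f = a·X² + 2·b·X·Y + c·Y² a form with b² - a·c = Δ. Then the group of automorphs of f in SL(2,ℤ) modulo {±1}, i.e. { M ∈ SL(2,ℤ) : f·M = f }/{±1}, is infinite cyclic. -/
/-- Coefficients of the form `f·M`, for `f = [a, b, c]` and `M = [[p,q],[r,s]]`. -/
def formSub (a b c p q r s : ℤ) : ℤ × ℤ × ℤ :=
  (a * p ^ 2 + 2 * b * p * r + c * r ^ 2,
   a * p * q + b * (p * s + q * r) + c * r * s,
   a * q ^ 2 + 2 * b * q * s + c * s ^ 2)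

open Matrix Real

abbrev SL2 := Matrix.SpecialLinearGroup (Fin 2) ℤ

/-- The linear relations characterizing automorphs of `[a,b,c]`. -/
def ARel (a b c : ℤ) (M : SL2) : Prop :=
  a * (M.1 1 1 - M.1 0 0) = 2 * b * M.1 1 0 ∧ a * M.1 0 1 = -(c * M.1 1 0)

theorem detfact (M : SL2) : M.1 0 0 * M.1 1 1 - M.1 0 1 * M.1 1 0 = 1 := by
  have := M.2
  rwa [Matrix.det_fin_two] at this

theorem mulentry (M N : SL2) (i j : Fin 2) :
    (M * N).1 i j = M.1 i 0 * N.1 0 j + M.1 i 1 * N.1 1 j := by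
  rw [Matrix.SpecialLinearGroup.coe_mul, Matrix.mul_apply, Fin.sum_univ_two]

theorem inv_coe (M : SL2) : (M⁻¹).1 = !![M.1 1 1, -M.1 0 1; -M.1 1 0, M.1 0 0] := by
  rw [Matrix.SpecialLinearGroup.coe_inv, Matrix.adjugate_fin_two]

/-- The real number `t + u√Δ` attached to `M`, where `t = (p+s)/2`, `u = r/a`. -/
noncomputable def phi (a Δ : ℤ) (M : SL2) : ℝ :=
  ((a : ℝ) * (M.1 0 0 + M.1 1 1) + 2 * M.1 1 0 * √(Δ : ℝ)) / (2 * a)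

section

variable {a b c Δ : ℤ} (ha : a ≠ 0) (hc : c ≠ 0) (hΔpos : 0 < Δ) (hΔns : ¬ IsSquare Δ)
  (hf : b ^ 2 - a * c = Δ)

include ha hc in
theorem rel_iff (M : SL2) :
    ARel a b c M ↔ formSub a b c (M.1 0 0) (M.1 0 1) (M.1 1 0) (M.1 1 1) = (a, b, c) := by
  have hdet := detfact M
  set p := M.1 0 0; set q := M.1 0 1; set r := M.1 1 0; set s := M.1 1 1
  unfold formSub
  rw [Prod.mk.injEq, Prod.mk.injEq]
  constructor
  · rintro ⟨h1, h2⟩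
    have h3 : c * (s - p) = -(2 * b * q) := by
      apply mul_left_cancel₀ ha
      linear_combination c * h1 + 2 * b * h2
    refine ⟨?_, ?_, ?_⟩
    · apply mul_left_cancel₀ ha
      linear_combination (a^2) * hdet - (a*p) * h1 + (a*r) * h2
    · apply mul_left_cancel₀ ha
      linear_combination (a*p + 2*b*r) * h2 + (c*r) * h1 + (a*b) * hdet
    · apply mul_left_cancel₀ hc
      linear_combination (c^2) * hdet + (c*s) * h3 + (c*q) * h2
  · rintro ⟨hE1, hE2, hE3⟩
    constructor
    · linear_combination (-s) * hE1 + r * hE2 + (a*p + b*r) * hdet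
    · linear_combination (-q) * hE1 + p * hE2 - (b*p + c*r) * hdet

include ha in
theorem arel_mul {M N : SL2} (hM : ARel a b c M) (hN : ARel a b c N) :
    ARel a b c (M * N) := by
  obtain ⟨h1, h2⟩ := hM; obtain ⟨h1', h2'⟩ := hN
  set p := M.1 0 0; set q := M.1 0 1; set r := M.1 1 0; set s := M.1 1 1
  set p' := N.1 0 0; set q' := N.1 0 1; set r' := N.1 1 0; set s' := N.1 1 1
  constructor
  · rw [mulentry, mulentry, mulentry]
    apply mul_left_cancel₀ ha
    linear_combination (a*s' - 2*b*r') * h1 - (a*r') * h2 + (a*p + 2*b*r) * h1' + (a*r) * h2'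
  · rw [mulentry, mulentry]
    apply mul_left_cancel₀ ha
    linear_combination (c*r') * h1 + (a*s') * h2 - (c*r) * h1' + (a*p) * h2'

theorem arel_inv {M : SL2} (hM : ARel a b c M) : ARel a b c M⁻¹ := by
  obtain ⟨h1, h2⟩ := hM
  constructor <;> rw [inv_coe] <;> simp <;> linarith

theorem arel_one : ARel a b c 1 := by constructor <;> simp

theorem arel_neg {M : SL2} (hM : ARel a b c M) : ARel a b c (-M) := by
  obtain ⟨h1, h2⟩ := hM
  constructor <;> simp [Matrix.SpecialLinearGroup.coe_neg] <;> linarith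

include ha in
theorem arel_pow {M : SL2} (hM : ARel a b c M) (n : ℕ) : ARel a b c (M ^ n) := by
  induction n with
  | zero => simpa using arel_one
  | succ n ih => rw [pow_succ]; exact arel_mul ha ih hM

include ha in
theorem arel_zpow {M : SL2} (hM : ARel a b c M) (k : ℤ) : ARel a b c (M ^ k) := by
  rcases k with n | n
  · simpa using arel_pow ha hM n
  · rw [zpow_negSucc]; exact arel_inv (arel_pow ha hM (n + 1))

include ha hΔpos hf in
theorem phi_mul {M N : SL2} (hM : ARel a b c M) (hN : ARel a b c N) :
    phi a Δ (M * N) = phi a Δ M * phi a Δ N := by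
  obtain ⟨h1, h2⟩ := hM; obtain ⟨h1', h2'⟩ := hN
  have hsq : √(Δ : ℝ) * √(Δ : ℝ) = (Δ : ℝ) :=
    Real.mul_self_sqrt (by exact_mod_cast hΔpos.le)
  have c1 : (a : ℝ) * ((M.1 1 1 : ℝ) - (M.1 0 0 : ℝ)) = 2 * b * (M.1 1 0 : ℝ) := by
    exact_mod_cast h1
  have c2 : (a : ℝ) * (M.1 0 1 : ℝ) = -((c : ℝ) * (M.1 1 0 : ℝ)) := by exact_mod_cast h2
  have c1' : (a : ℝ) * ((N.1 1 1 : ℝ) - (N.1 0 0 : ℝ)) = 2 * b * (N.1 1 0 : ℝ) := by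
    exact_mod_cast h1'
  have c2' : (a : ℝ) * (N.1 0 1 : ℝ) = -((c : ℝ) * (N.1 1 0 : ℝ)) := by exact_mod_cast h2'
  have chf : (b : ℝ) ^ 2 - (a : ℝ) * (c : ℝ) = (Δ : ℝ) := by exact_mod_cast hf
  have hA : (a : ℝ) ≠ 0 := Int.cast_ne_zero.mpr ha
  rw [phi, phi, phi, mulentry, mulentry, mulentry]
  push_cast
  set sq := √(Δ : ℝ)
  set p := (M.1 0 0 : ℝ); set q := (M.1 0 1 : ℝ); set r := (M.1 1 0 : ℝ)
  set s := (M.1 1 1 : ℝ)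
  set p' := (N.1 0 0 : ℝ); set q' := (N.1 0 1 : ℝ); set r' := (N.1 1 0 : ℝ)
  set s' := (N.1 1 1 : ℝ)
  rw [div_mul_div_comm]
  rw [div_eq_div_iff (by simp [hA]) (by simp [hA])]
  ring_nf
  linear_combination (norm := ring_nf) (2*a*((a*s' - a*p' + 2*sq*r') * c1 + (2*a*r') * c2
    + (2*b*r - 2*sq*r) * c1' + (2*a*r) * c2' + (4*r*r') * chf - (4*r*r') * hsq))

include ha hΔpos hf in
theorem phi_norm {M : SL2} (hM : ARel a b c M) :
    phi a Δ M * (((a : ℝ) * (M.1 0 0 + M.1 1 1) - 2 * M.1 1 0 * √(Δ : ℝ)) / (2 * a)) = 1 := by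
  obtain ⟨h1, h2⟩ := hM
  have hsq : √(Δ : ℝ) * √(Δ : ℝ) = (Δ : ℝ) :=
    Real.mul_self_sqrt (by exact_mod_cast hΔpos.le)
  have c1 : (a : ℝ) * ((M.1 1 1 : ℝ) - (M.1 0 0 : ℝ)) = 2 * b * (M.1 1 0 : ℝ) := by
    exact_mod_cast h1
  have c2 : (a : ℝ) * (M.1 0 1 : ℝ) = -((c : ℝ) * (M.1 1 0 : ℝ)) := by exact_mod_cast h2
  have cdet : (M.1 0 0 : ℝ) * (M.1 1 1 : ℝ) - (M.1 0 1 : ℝ) * (M.1 1 0 : ℝ) = 1 := by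
    exact_mod_cast detfact M
  have chf : (b : ℝ) ^ 2 - (a : ℝ) * (c : ℝ) = (Δ : ℝ) := by exact_mod_cast hf
  have hA : (a : ℝ) ≠ 0 := Int.cast_ne_zero.mpr ha
  rw [phi, div_mul_div_comm, div_eq_one_iff_eq (by simp [hA])]
  set sq := √(Δ : ℝ)
  set p := (M.1 0 0 : ℝ); set q := (M.1 0 1 : ℝ); set r := (M.1 1 0 : ℝ)
  set s := (M.1 1 1 : ℝ)
  linear_combination (norm := ring_nf) (a*(s-p) + 2*b*r) * c1 + (4*a*r) * c2
    + (4*r^2) * chf - (4*r^2) * hsq + (4*a^2) * cdet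

include ha hΔpos hf in
theorem phi_ne_zero {M : SL2} (hM : ARel a b c M) : phi a Δ M ≠ 0 :=
  left_ne_zero_of_mul_eq_one (phi_norm ha hΔpos hf hM)

include ha hΔpos hf in
theorem phi_add_inv {M : SL2} (hM : ARel a b c M) :
    phi a Δ M + (phi a Δ M)⁻¹ = ((M.1 0 0 : ℝ) + M.1 1 1) := by
  have h := phi_norm ha hΔpos hf hM
  have hA : (a : ℝ) ≠ 0 := Int.cast_ne_zero.mpr ha
  rw [inv_eq_of_mul_eq_one_right h, phi]
  field_simp
  ring

include ha in
theorem phi_one : phi a Δ (1 : SL2) = 1 := by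
  have hA : (a : ℝ) ≠ 0 := Int.cast_ne_zero.mpr ha
  rw [phi]
  norm_num [Matrix.SpecialLinearGroup.coe_one, Matrix.one_apply]
  field_simp

theorem phi_neg (M : SL2) : phi a Δ (-M) = - phi a Δ M := by
  rw [phi, phi, Matrix.SpecialLinearGroup.coe_neg]
  simp only [Matrix.neg_apply]
  push_cast
  ring

include ha hΔpos hf in
theorem phi_inv {M : SL2} (hM : ARel a b c M) : phi a Δ M⁻¹ = (phi a Δ M)⁻¹ := by
  have h := phi_mul ha hΔpos hf hM (arel_inv hM)
  rw [mul_inv_cancel, phi_one ha] at h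
  exact eq_inv_of_mul_eq_one_right h.symm

include ha hΔpos hf in
theorem phi_pow {M : SL2} (hM : ARel a b c M) (n : ℕ) :
    phi a Δ (M ^ n) = phi a Δ M ^ n := by
  induction n with
  | zero => simpa using phi_one ha
  | succ n ih =>
      rw [pow_succ, pow_succ, phi_mul ha hΔpos hf (arel_pow ha hM n) hM, ih]

include ha hΔpos hf in
theorem phi_zpow {M : SL2} (hM : ARel a b c M) (k : ℤ) :
    phi a Δ (M ^ k) = phi a Δ M ^ k := by
  rcases k with n | n
  · simpa using phi_pow ha hΔpos hf hM n
  · rw [zpow_negSucc, phi_inv ha hΔpos hf (arel_pow ha hM (n + 1)),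
      phi_pow ha hΔpos hf hM (n + 1), zpow_negSucc]

include hΔpos hΔns in
theorem int_mul_sqrt_ne {u v : ℤ} (hv : v ≠ 0) : (v : ℝ) * √(Δ : ℝ) ≠ (u : ℝ) := by
  intro h
  have hirr : Irrational (√(Δ : ℝ)) :=
    (irrational_sqrt_intCast_iff_of_nonneg hΔpos.le).mpr hΔns
  have hv' : (v : ℝ) ≠ 0 := Int.cast_ne_zero.mpr hv
  exact hirr ⟨(u : ℚ) / (v : ℚ), by push_cast; rw [div_eq_iff hv']; linarith⟩

include ha hΔpos hΔns in
theorem phi_inj {M N : SL2} (hM : ARel a b c M) (hN : ARel a b c N)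
    (h : phi a Δ M = phi a Δ N) : M = N := by
  have hA : (a : ℝ) ≠ 0 := Int.cast_ne_zero.mpr ha
  rw [phi, phi, div_eq_div_iff (by simp [hA]) (by simp [hA])] at h
  have h' := mul_right_cancel₀ (show (2 * (a:ℝ)) ≠ 0 by simp [hA]) h
  -- first, the off-diagonal (√Δ) parts agree
  have hr : M.1 1 0 = N.1 1 0 := by
    by_contra hrr
    have h2 : ((2 * (M.1 1 0 - N.1 1 0) : ℤ) : ℝ) * √(Δ : ℝ)
        = ((a * (N.1 0 0 + N.1 1 1) - a * (M.1 0 0 + M.1 1 1) : ℤ) : ℝ) := by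
      push_cast
      linarith [h']
    exact int_mul_sqrt_ne hΔpos hΔns (by omega) h2
  have htr : M.1 0 0 + M.1 1 1 = N.1 0 0 + N.1 1 1 := by
    rw [hr] at h'
    have h2 : ((a * (M.1 0 0 + M.1 1 1) : ℤ) : ℝ) = ((a * (N.1 0 0 + N.1 1 1) : ℤ) : ℝ) := by
      push_cast
      linarith [h']
    have := Int.cast_injective (α := ℝ) h2
    exact mul_left_cancel₀ ha this
  obtain ⟨h1, h2⟩ := hM; obtain ⟨h1', h2'⟩ := hN
  have hq : M.1 0 1 = N.1 0 1 := by
    apply mul_left_cancel₀ ha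
    rw [h2, h2', hr]
  have hs : M.1 1 1 = N.1 1 1 := by
    have hd : M.1 1 1 - M.1 0 0 = N.1 1 1 - N.1 0 0 := by
      apply mul_left_cancel₀ ha
      rw [h1, h1', hr]
    omega
  have hp : M.1 0 0 = N.1 0 0 := by omega
  ext i j
  fin_cases i <;> fin_cases j <;> assumption

include ha hΔpos hΔns hf in
theorem exists_big : ∃ M : SL2, ARel a b c M ∧ 1 < phi a Δ M := by
  obtain ⟨x, y, hxy, hy⟩ := Pell.exists_of_not_isSquare hΔpos hΔns
  have hA : (a : ℝ) ≠ 0 := Int.cast_ne_zero.mpr ha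
  have hsq : √(Δ : ℝ) * √(Δ : ℝ) = (Δ : ℝ) :=
    Real.mul_self_sqrt (by exact_mod_cast hΔpos.le)
  have hdet : (!![x - b*y, -(c*y); a*y, x + b*y] : Matrix (Fin 2) (Fin 2) ℤ).det = 1 := by
    rw [Matrix.det_fin_two_of]
    linear_combination hxy - y^2 * hf
  set M₁ : SL2 := ⟨!![x - b*y, -(c*y); a*y, x + b*y], hdet⟩ with hM₁def
  have e00 : M₁.1 0 0 = x - b*y := rfl
  have e01 : M₁.1 0 1 = -(c*y) := rfl
  have e10 : M₁.1 1 0 = a*y := rfl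
  have e11 : M₁.1 1 1 = x + b*y := rfl
  have hrel : ARel a b c M₁ := by
    constructor
    · rw [e00, e10, e11]; ring
    · rw [e01, e10]; ring
  have hphi : phi a Δ M₁ = (x : ℝ) + (y : ℝ) * √(Δ : ℝ) := by
    rw [phi, e00, e10, e11]
    push_cast
    field_simp
    ring
  -- phi M₁ is not 0, 1 or -1
  have hne1 : ∀ M : SL2, ARel a b c M → M.1 1 0 ≠ 0 → phi a Δ M ≠ 1 ∧ phi a Δ M ≠ -1 := by
    intro M hM hr0
    constructor <;> intro hone
    · have : ((2 * M.1 1 0 : ℤ) : ℝ) * √(Δ : ℝ)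
          = ((2 * a - a * (M.1 0 0 + M.1 1 1) : ℤ) : ℝ) := by
        rw [phi, div_eq_one_iff_eq (by simp [hA])] at hone
        push_cast
        linarith
      exact int_mul_sqrt_ne hΔpos hΔns (by omega) this
    · have : ((2 * M.1 1 0 : ℤ) : ℝ) * √(Δ : ℝ)
          = ((-(2 * a) - a * (M.1 0 0 + M.1 1 1) : ℤ) : ℝ) := by
        rw [phi, div_eq_iff (by simp [hA])] at hone
        push_cast
        linarith
      exact int_mul_sqrt_ne hΔpos hΔns (by omega) this
  -- produce an automorph with |phi| > 1, then adjust the sign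
  have habs : ∃ M : SL2, ARel a b c M ∧ 1 < |phi a Δ M| := by
    have hr0 : M₁.1 1 0 ≠ 0 := by rw [e10]; exact mul_ne_zero ha hy
    have h0 := phi_ne_zero ha hΔpos hf hrel
    have hn1 := hne1 M₁ hrel hr0
    have habs1 : |phi a Δ M₁| ≠ 1 := by
      intro h
      rcases abs_eq (by norm_num : (0:ℝ) ≤ 1) |>.mp h with h' | h'
      · exact hn1.1 h'
      · exact hn1.2 h'
    rcases lt_or_gt_of_ne habs1 with hlt | hgt
    · refine ⟨M₁⁻¹, arel_inv hrel, ?_⟩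
      rw [phi_inv ha hΔpos hf hrel, abs_inv]
      rw [one_lt_inv_iff₀]
      exact ⟨abs_pos.mpr h0, hlt⟩
    · exact ⟨M₁, hrel, hgt⟩
  obtain ⟨M, hM, hMabs⟩ := habs
  rcases lt_abs.mp hMabs with h | h
  · exact ⟨M, hM, h⟩
  · refine ⟨-M, arel_neg hM, ?_⟩
    rw [phi_neg]
    exact h

end

theorem automorphs_infinite_cyclic (Δ a b c : ℤ) (hΔpos : 0 < Δ) (hΔns : ¬ IsSquare Δ)
    (hf : b ^ 2 - a * c = Δ) :
    ∃ M : Matrix.SpecialLinearGroup (Fin 2) ℤ,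
      formSub a b c (M.1 0 0) (M.1 0 1) (M.1 1 0) (M.1 1 1) = (a, b, c) ∧
      (∀ k : ℤ, k ≠ 0 → M ^ k ≠ 1 ∧ M ^ k ≠ -1) ∧
      (∀ N : Matrix.SpecialLinearGroup (Fin 2) ℤ,
        formSub a b c (N.1 0 0) (N.1 0 1) (N.1 1 0) (N.1 1 1) = (a, b, c) →
        ∃ k : ℤ, N = M ^ k ∨ N = -(M ^ k)) := by
  have ha : a ≠ 0 := by rintro rfl; exact hΔns ⟨b, by rw [← hf]; ring⟩
  have hc : c ≠ 0 := by rintro rfl; exact hΔns ⟨b, by rw [← hf]; ring⟩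
  -- trace bound for automorphs with phi > 1
  have trace_big : ∀ M : SL2, ARel a b c M → 1 < phi a Δ M →
      (2 : ℝ) < ((M.1 0 0 : ℝ) + M.1 1 1) := by
    intro M hM hgt
    rw [← phi_add_inv ha hΔpos hf hM]
    have h0 : (0:ℝ) < phi a Δ M := lt_trans one_pos hgt
    have hinv : phi a Δ M * (phi a Δ M)⁻¹ = 1 := mul_inv_cancel₀ (ne_of_gt h0)
    have h1 : (0:ℝ) < phi a Δ M - 1 := by linarith
    nlinarith [hinv, mul_pos h1 h1]
  -- get an automorph with phi > 1
  obtain ⟨M₁, hM₁, hM₁gt⟩ := exists_big ha hΔpos hΔns hf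
  -- minimize the trace
  set S : Set ℕ := {n | ∃ M : SL2, ARel a b c M ∧ 1 < phi a Δ M
    ∧ (M.1 0 0 + M.1 1 1).toNat = n} with hSdef
  have hS : S.Nonempty := ⟨_, M₁, hM₁, hM₁gt, rfl⟩
  obtain ⟨M₀, hM₀, hM₀gt, hM₀tr⟩ := Nat.sInf_mem hS
  set x := phi a Δ M₀ with hxdef
  have hx0 : (0:ℝ) < x := lt_trans one_pos hM₀gt
  -- minimality of x among phis > 1
  have hmin : ∀ N : SL2, ARel a b c N → 1 < phi a Δ N → x ≤ phi a Δ N := by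
    intro N hN hNgt
    by_contra hlt
    push_neg at hlt
    have htrlt : ((N.1 0 0 : ℝ) + N.1 1 1) < ((M₀.1 0 0 : ℝ) + M₀.1 1 1) := by
      rw [← phi_add_inv ha hΔpos hf hN, ← phi_add_inv ha hΔpos hf hM₀, ← hxdef]
      have hN0 : (0:ℝ) < phi a Δ N := lt_trans one_pos hNgt
      have hprod : (1:ℝ) < phi a Δ N * x := by nlinarith
      have key2 : (phi a Δ N + (phi a Δ N)⁻¹ - (x + x⁻¹)) * (phi a Δ N * x)
          = (phi a Δ N - x) * (phi a Δ N * x - 1) := by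
        field_simp
        ring
      nlinarith [key2, mul_pos hN0 hx0]
    have htrlt' : N.1 0 0 + N.1 1 1 < M₀.1 0 0 + M₀.1 1 1 := by exact_mod_cast htrlt
    have hNtr2 : (2:ℝ) < ((N.1 0 0 : ℝ) + N.1 1 1) := trace_big N hN hNgt
    have hNtr2' : 2 < N.1 0 0 + N.1 1 1 := by exact_mod_cast hNtr2
    have hle : sInf S ≤ (N.1 0 0 + N.1 1 1).toNat := Nat.sInf_le ⟨N, hN, hNgt, rfl⟩
    omega
  refine ⟨M₀, (rel_iff ha hc M₀).mp hM₀, ?_, ?_⟩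
  · intro k hk
    have hz := phi_zpow ha hΔpos hf hM₀ k
    have hmono := zpow_right_strictMono₀ hM₀gt
    constructor
    · intro h
      rw [h, phi_one ha] at hz
      have : x ^ (0:ℤ) = x ^ k := by rw [zpow_zero, hz]
      exact hk (hmono.injective this).symm
    · intro h
      rw [h, phi_neg, phi_one ha] at hz
      have : (0:ℝ) < x ^ k := zpow_pos hx0 k
      rw [← hz] at this
      norm_num at this
  · intro N hNf
    have hN : ARel a b c N := (rel_iff ha hc N).mpr hNf
    -- the positive-phi case
    have pos_case : ∀ N : SL2, ARel a b c N → 0 < phi a Δ N → ∃ k : ℤ, N = M₀ ^ k := by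
      intro N hN hpos
      obtain ⟨k, hk1, hk2⟩ := exists_mem_Ico_zpow hpos hM₀gt
      refine ⟨k, ?_⟩
      have hrelk : ARel a b c (M₀ ^ k) := arel_zpow ha hM₀ k
      have hrelk' : ARel a b c ((M₀ ^ k)⁻¹) := arel_inv hrelk
      set N' := N * (M₀ ^ k)⁻¹ with hN'def
      have hN' : ARel a b c N' := arel_mul ha hN hrelk'
      have hxk : (0:ℝ) < x ^ k := zpow_pos hx0 k
      have hφ : phi a Δ N' = phi a Δ N * (x ^ k)⁻¹ := by
        rw [hN'def, phi_mul ha hΔpos hf hN hrelk', phi_inv ha hΔpos hf hrelk,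
          phi_zpow ha hΔpos hf hM₀ k]
      have hge1 : 1 ≤ phi a Δ N' := by
        rw [hφ, ← div_eq_mul_inv, le_div_iff₀ hxk, one_mul]
        exact hk1
      rcases eq_or_lt_of_le hge1 with heq | hgt
      · have : N' = 1 := phi_inj ha hΔpos hΔns hN' arel_one (by rw [← heq, phi_one ha])
        rw [hN'def] at this
        exact mul_inv_eq_one.mp this
      · exfalso
        have hlt : phi a Δ N' < x := by
          rw [hφ, ← div_eq_mul_inv, div_lt_iff₀ hxk]
          calc phi a Δ N < x ^ (k + 1) := hk2
            _ = x * x ^ k := by rw [zpow_add_one₀ (ne_of_gt hx0)]; ring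
        exact absurd (hmin N' hN' hgt) (not_le.mpr hlt)
    rcases (phi_ne_zero ha hΔpos hf hN).lt_or_gt with hneg | hpos
    · obtain ⟨k, hk⟩ := pos_case (-N) (arel_neg hN) (by rw [phi_neg]; linarith)
      exact ⟨k, Or.inr (by rw [← hk, neg_neg])⟩
    · obtain ⟨k, hk⟩ := pos_case N hN hpos
      exact ⟨k, Or.inl hk⟩
end

section
/- Let f = a·X² + 2·b·X·Y + c·Y² with Δ := b² - a·c a positive nonsquare integer, and let m be a nonzero integer. If (X,Y) = (p,r) is a proper representation of m by f (i.e. f(p,r) = m and gcd(p,r) = 1), then there exists an integer n with n² ≡ Δ (mod m) and a matrix M = [[p,q],[r,s]] ∈ SL(2,ℤ) whose first column is (p,r) such that f·M = m·X² + 2·n·X·Y + ((n² - Δ)/m)·Y². -/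
theorem proper_representation_gives_matrix (Δ a b c m p r : ℤ)
    (hΔpos : 0 < Δ) (hΔns : ¬ IsSquare Δ) (hf : b ^ 2 - a * c = Δ) (hm : m ≠ 0)
    (hrep : a * p ^ 2 + 2 * b * p * r + c * r ^ 2 = m) (hcop : Int.gcd p r = 1) :
    ∃ n q s : ℤ, m ∣ n ^ 2 - Δ ∧ p * s - q * r = 1 ∧
      formSub a b c p q r s = (m, n, (n ^ 2 - Δ) / m) := by
  obtain ⟨u, v, huv⟩ := Int.isCoprime_iff_gcd_eq_one.mpr hcop
  set q : ℤ := -v with hq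
  set s : ℤ := u with hs
  have hdet : p * s - q * r = 1 := by
    simp only [hq, hs]
    linarith [huv]
  set n : ℤ := a * p * q + b * (p * s + q * r) + c * r * s with hn
  set L : ℤ := a * q ^ 2 + 2 * b * q * s + c * s ^ 2 with hL
  have key : n ^ 2 - Δ = m * L := by
    rw [hn, hL]
    linear_combination (a * q ^ 2 + 2 * b * q * s + c * s ^ 2) * hrep + hf +
      (b ^ 2 - a * c) * (p * s - q * r + 1) * hdet
  exact ⟨n, q, s, ⟨L, key⟩, hdet, by
    rw [formSub, hrep, key, Int.mul_ediv_cancel_left _ hm]⟩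
end

section
/- Let x and y be irrational real numbers and let M ∈ GL(2,ℤ) satisfy M·x = y under the linear fractional action. Then there exist nonnegative integers i, j such that x_i = y_j, where (x_i) and (y_j) are the derivative sequences of x and y (x₀ = x, x_{k+1} = 1/(x_k - ⌊x_k⌋), similarly for y). -/
noncomputable def cfShift (x : ℝ) : ℝ := 1 / (x - ⌊x⌋)

lemma fract_pos (x : ℝ) (hx : Irrational x) : 0 < x - ⌊x⌋ := by
  have h := Int.fract_pos.mpr (fun h => hx ⟨⌊x⌋, by exact_mod_cast h.symm⟩ )
  rw [Int.fract] at h; linarith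

lemma one_lt_cfShift (x : ℝ) (hx : Irrational x) : 1 < cfShift x := by
  have h1 := fract_pos x hx
  have h2 : x - ⌊x⌋ < 1 := by have := Int.fract_lt_one x; rw [Int.fract] at this; linarith
  rw [cfShift, lt_div_iff₀ h1]; linarith

lemma cfShift_irrational (x : ℝ) (hx : Irrational x) : Irrational (cfShift x) := by
  have h1 : Irrational (x - ⌊x⌋) := hx.sub_intCast _
  rw [cfShift, one_div]; exact h1.inv

lemma cfShift_mul (x : ℝ) (hx : Irrational x) : (x - ⌊x⌋) * cfShift x = 1 := by
  have h1 := fract_pos x hx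
  rw [cfShift, mul_one_div, div_self (ne_of_gt h1)]

lemma iter_irrational (x : ℝ) (hx : Irrational x) (k : ℕ) : Irrational (cfShift^[k] x) := by
  induction k with
  | zero => exact hx
  | succ n ih => rw [Function.iterate_succ_apply']; exact cfShift_irrational _ ih

lemma one_lt_iter (x : ℝ) (hx : Irrational x) (k : ℕ) : 1 < cfShift^[k+1] x := by
  rw [Function.iterate_succ_apply']
  exact one_lt_cfShift _ (iter_irrational x hx k)

lemma cfShift_add_int (x : ℝ) (b : ℤ) : cfShift (x + b) = cfShift x := by
  rw [cfShift, cfShift, Int.floor_add_intCast]; push_cast; ring_nf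

lemma lemA : ∀ (n : ℕ) (a b c d : ℤ) (x y : ℝ), Irrational x → 1 < x → Irrational y →
    0 ≤ a → 0 ≤ b → 0 ≤ c → 0 ≤ d → ¬(c = 0 ∧ d = 0) →
    (a*d - b*c = 1 ∨ a*d - b*c = -1) →
    (a:ℝ)*x + b = y * ((c:ℝ)*x + d) →
    2*(a+b+c+d) + (if y < 1 then 1 else 0) ≤ (n:ℤ) →
    ∃ i j, cfShift^[i] x = cfShift^[j] y := by
  intro n
  induction n using Nat.strong_induction_on with
  | _ n IH =>
  intro a b c d x y hx hx1 hy ha hb hc hd hcd hdet heq hmeas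
  rcases eq_or_lt_of_le hc with hc0 | hc1
  · -- c = 0 case
    have hd1 : 0 < d := by
      rcases eq_or_lt_of_le hd with h | h
      · exact absurd ⟨hc0.symm, h.symm⟩ hcd
      · exact h
    have had : a * d = 1 := by
      rcases hdet with h | h
      · rw [← hc0] at h; simpa using h
      · exfalso; rw [← hc0] at h; simp at h
        have := mul_nonneg ha hd; omega
    obtain ⟨ha1, hd1'⟩ : a = 1 ∧ d = 1 := by
      rcases Int.mul_eq_one_iff_eq_one_or_neg_one.mp had with h | h
      · exact h
      · omega
    have hyx : y = x + b := by
      rw [ha1, hd1', ← hc0] at heq; push_cast at heq; linarith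
    refine ⟨1, 1, ?_⟩
    simp only [Function.iterate_one]
    rw [hyx, cfShift_add_int]
  · -- 1 ≤ c
    have hc1' : (1:ℝ) ≤ c := by exact_mod_cast hc1
    have hd' : (0:ℝ) ≤ d := by exact_mod_cast hd
    have ha' : (0:ℝ) ≤ a := by exact_mod_cast ha
    have hb' : (0:ℝ) ≤ b := by exact_mod_cast hb
    have hden : (0:ℝ) < (c:ℝ)*x + d := by nlinarith
    have hy0 : 0 < y := by
      rcases lt_trichotomy y 0 with h | h | h
      · exfalso; nlinarith
      · exact absurd h (by simpa using hy.ne_int 0)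
      · exact h
    have hnum : (0:ℝ) < (a:ℝ)*x + b := by rw [heq]; exact mul_pos hy0 hden
    set m : ℤ := ⌊y⌋ with hmdef
    have hm0 : 0 ≤ m := Int.floor_nonneg.mpr hy0.le
    have hym : (m:ℝ) ≤ y := Int.floor_le y
    have hym1 : y < m + 1 := Int.lt_floor_add_one y
    have hyne : y ≠ (m:ℝ) := by simpa using hy.ne_int m
    rcases eq_or_lt_of_le hm0 with hm0' | hm1
    · -- m = 0, so 0 < y < 1 : swap rows
      have hylt1 : y < 1 := by rw [← hm0'] at hym1; simpa using hym1
      rw [if_pos hylt1] at hmeas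
      have hn2 : (3:ℤ) ≤ (n:ℤ) := by linarith
      have hn : n - 1 < n := by omega
      have hcast : ((n-1 : ℕ):ℤ) = (n:ℤ) - 1 := by omega
      have hyS : Irrational (cfShift y) := cfShift_irrational y hy
      have heq' : (c:ℝ)*x + d = cfShift y * ((a:ℝ)*x + b) := by
        have hfl : ((⌊y⌋:ℤ):ℝ) = 0 := by rw [← hmdef, ← hm0']; norm_num
        rw [cfShift, hfl, sub_zero, heq]
        field_simp
      have hdet' : c*b - d*a = 1 ∨ c*b - d*a = -1 := by
        rcases hdet with h | h
        · right; linarith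
        · left; linarith
      have hab : ¬(a = 0 ∧ b = 0) := by
        rintro ⟨h1, h2⟩
        rw [h1, h2] at hnum; norm_num at hnum
      have hmeas' : 2*(c+d+a+b) + (if cfShift y < 1 then 1 else 0) ≤ ((n-1:ℕ):ℤ) := by
        rw [if_neg (not_lt.mpr (one_lt_cfShift y hy).le), hcast]; linarith
      obtain ⟨i, j, hij⟩ := IH (n-1) hn c d a b x (cfShift y) hx hx1 hyS hc hd ha hb hab
        hdet' heq' hmeas'
      exact ⟨i, j+1, by rw [hij, Function.iterate_succ_apply]⟩
    · -- 1 ≤ m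
      have hm1' : (1:ℝ) ≤ m := by exact_mod_cast hm1
      -- establish hA : m*c ≤ a and hB : m*d ≤ b
      have hAB : m*c ≤ a ∧ m*d ≤ b := by
        rcases hdet with he | he
        · -- det = 1
          have hd1 : 1 ≤ d := by
            rcases eq_or_lt_of_le hd with h | h
            · exfalso
              have hbc : 0 ≤ b*c := mul_nonneg hb hc
              rw [← h] at he; simp only [mul_zero, zero_sub] at he; omega
            · exact h
          have key1 : ((c:ℝ)*x+d) * ((c:ℝ)*y - a) = ((b*c - a*d : ℤ):ℝ) := by
            push_cast; linear_combination (-(c:ℝ)) * heq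
          have he' : ((b*c - a*d : ℤ):ℝ) = -1 := by rw [show b*c - a*d = -1 by omega]; norm_num
          have hcylt : (c:ℝ)*y - a < 0 := by
            rw [he'] at key1; nlinarith
          have hA : m*c + 1 ≤ a := by
            have h1 : ((m*c:ℤ):ℝ) < a := by push_cast; nlinarith
            have h2 : m*c < a := by exact_mod_cast h1
            omega
          refine ⟨by omega, ?_⟩
          by_contra hB'
          push_neg at hB'
          have h1 : (m*c+1)*d ≤ a*d := mul_le_mul_of_nonneg_right hA hd
          have h2 : b*c ≤ (m*d-1)*c := mul_le_mul_of_nonneg_right (by omega) hc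
          nlinarith
        · -- det = -1
          have key2 : ((c:ℝ)*x+d) * ((d:ℝ)*y - b) = ((a*d - b*c : ℤ):ℝ) * x := by
            push_cast; linear_combination (-(d:ℝ)) * heq
          have he' : ((a*d - b*c : ℤ):ℝ) = -1 := by rw [he]; norm_num
          have hdylt : (d:ℝ)*y - b < 0 := by
            rw [he'] at key2; nlinarith
          have hB : m*d + 1 ≤ b := by
            have h1 : ((m*d:ℤ):ℝ) < b := by push_cast; nlinarith
            have h2 : m*d < b := by exact_mod_cast h1
            omega
          refine ⟨?_, by omega⟩
          by_contra hA'
          push_neg at hA'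
          have h1 : a*d ≤ (m*c-1)*d := mul_le_mul_of_nonneg_right (by omega) hd
          have h2 : (m*d+1)*c ≤ b*c := mul_le_mul_of_nonneg_right hB hc
          have hcd1 : c + d ≤ 1 := by nlinarith
          have hcc : c = 1 := by omega
          have hdd : d = 0 := by omega
          have hbb : b = 1 := by rw [hcc, hdd] at he; omega
          -- y = a + 1/x so m ≤ a, contradiction with a < m*c = m
          have hya : y < (a:ℝ) + 1 := by
            rw [hcc, hdd, hbb] at heq; push_cast at heq; nlinarith
          have : (m:ℝ) < a + 1 := lt_of_le_of_lt hym hya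
          have hma : m ≤ a := by exact_mod_cast Int.lt_add_one_iff.mp (by exact_mod_cast this)
          rw [hcc, mul_one] at hA'
          omega
      obtain ⟨hA, hB⟩ := hAB
      -- new matrix (c, d, a - m*c, b - m*d)
      have hnz : ¬(a - m*c = 0 ∧ b - m*d = 0) := by
        rintro ⟨h1, h2⟩
        have ha2 : a = m*c := by omega
        have hb2 : b = m*d := by omega
        have : a*d - b*c = 0 := by rw [ha2, hb2]; ring
        rcases hdet with h | h <;> omega
      have hdet' : c*(b - m*d) - d*(a - m*c) = 1 ∨ c*(b - m*d) - d*(a - m*c) = -1 := by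
        rcases hdet with h | h
        · right; linarith [show c*(b-m*d) - d*(a-m*c) = -(a*d - b*c) from by ring]
        · left; linarith [show c*(b-m*d) - d*(a-m*c) = -(a*d - b*c) from by ring]
      have hyS : Irrational (cfShift y) := cfShift_irrational y hy
      have hnum' : ((a - m*c:ℤ):ℝ)*x + ((b - m*d:ℤ):ℝ) = (y - m)*((c:ℝ)*x+d) := by
        push_cast; linear_combination heq
      have hymne : y - (m:ℝ) ≠ 0 := sub_ne_zero.mpr hyne
      have heq' : (c:ℝ)*x + d = cfShift y * (((a - m*c:ℤ):ℝ)*x + ((b - m*d:ℤ):ℝ)) := by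
        rw [cfShift, ← hmdef, hnum']
        field_simp
      -- measure
      have hsum1 : (1:ℤ) ≤ c + d := by omega
      have hmc : c ≤ m*c := le_mul_of_one_le_left hc hm1
      have hmd : d ≤ m*d := le_mul_of_one_le_left hd hm1
      have hmeas0 : 2*(a+b+c+d) ≤ (n:ℤ) := by
        split_ifs at hmeas <;> linarith
      have hn2 : (2:ℤ) ≤ (n:ℤ) := by linarith
      have hn : n - 1 < n := by omega
      have hcast : ((n-1 : ℕ):ℤ) = (n:ℤ) - 1 := by omega
      have hmeas' : 2*(c+d+(a-m*c)+(b-m*d)) + (if cfShift y < 1 then 1 else 0) ≤ ((n-1:ℕ):ℤ) := by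
        rw [if_neg (not_lt.mpr (one_lt_cfShift y hy).le), hcast]
        linarith
      obtain ⟨i, j, hij⟩ := IH (n-1) hn c d (a - m*c) (b - m*d) x (cfShift y) hx hx1 hyS
        hc hd (by omega) (by omega) hnz hdet' heq' hmeas'
      exact ⟨i, j+1, by rw [hij, Function.iterate_succ_apply]⟩

/-- continuant-style recursion for numerator/denominator rows -/
noncomputable def cfden (x : ℝ) (c d : ℤ) : ℕ → ℤ × ℤ
  | 0 => (c, d)
  | k+1 => ((cfden x c d k).1 * ⌊cfShift^[k] x⌋ + (cfden x c d k).2, (cfden x c d k).1)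

lemma cfden_fst_succ (x : ℝ) (c d : ℤ) (k : ℕ) :
    (cfden x c d (k+1)).1 = (cfden x c d k).1 * ⌊cfShift^[k] x⌋ + (cfden x c d k).2 := rfl

lemma cfden_snd_succ (x : ℝ) (c d : ℤ) (k : ℕ) :
    (cfden x c d (k+1)).2 = (cfden x c d k).1 := rfl

lemma cfden_T_succ (x : ℝ) (hx : Irrational x) (c d : ℤ) (k : ℕ) :
    ((cfden x c d (k+1)).1:ℝ) * cfShift^[k+1] x + ((cfden x c d (k+1)).2:ℝ)
    = cfShift^[k+1] x * (((cfden x c d k).1:ℝ) * cfShift^[k] x + ((cfden x c d k).2:ℝ)) := by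
  have hz := iter_irrational x hx k
  have hkey := cfShift_mul _ hz
  rw [cfden_fst_succ, cfden_snd_succ, Function.iterate_succ_apply']
  push_cast
  linear_combination (-((cfden x c d k).1:ℝ)) * hkey

lemma cfden_det_succ (x : ℝ) (a b c d : ℤ) (k : ℕ) :
    (cfden x a b (k+1)).1 * (cfden x c d (k+1)).2 - (cfden x a b (k+1)).2 * (cfden x c d (k+1)).1
    = -((cfden x a b k).1 * (cfden x c d k).2 - (cfden x a b k).2 * (cfden x c d k).1) := by
  rw [cfden_fst_succ, cfden_snd_succ, cfden_fst_succ, cfden_snd_succ]; ring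

set_option maxHeartbeats 1000000 in
lemma main' (x y : ℝ) (hx : Irrational x) (hy : Irrational y) (hy1 : 1 < y)
    (a b c d : ℤ) (hdet : a*d - b*c = 1 ∨ a*d - b*c = -1)
    (hT0 : 0 < (c:ℝ)*x + d)
    (heq : (a:ℝ)*x + b = y * ((c:ℝ)*x + d)) :
    ∃ i j, cfShift^[i] x = cfShift^[j] y := by
  set A : ℕ → ℤ := fun k => (cfden x a b k).1 with hAdef
  set B : ℕ → ℤ := fun k => (cfden x a b k).2 with hBdef
  set C : ℕ → ℤ := fun k => (cfden x c d k).1 with hCdef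
  set D : ℕ → ℤ := fun k => (cfden x c d k).2 with hDdef
  set X : ℕ → ℝ := fun k => cfShift^[k] x with hXdef
  set T : ℕ → ℝ := fun k => (C k:ℝ) * X k + (D k:ℝ) with hTdef
  have hCsucc : ∀ k, C (k+1) = C k * ⌊X k⌋ + D k := fun k => cfden_fst_succ x c d k
  have hDsucc : ∀ k, D (k+1) = C k := fun k => cfden_snd_succ x c d k
  have hTsucc : ∀ k, T (k+1) = X (k+1) * T k := fun k => cfden_T_succ x hx c d k
  have hSsucc : ∀ k, (A (k+1):ℝ) * X (k+1) + (B (k+1):ℝ)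
      = X (k+1) * ((A k:ℝ) * X k + (B k:ℝ)) := fun k => cfden_T_succ x hx a b k
  have hX1 : ∀ k, 1 < X (k+1) := one_lt_iter x hx
  have hXirr : ∀ k, Irrational (X k) := iter_irrational x hx
  have hdetk : ∀ k, A k * D k - B k * C k = 1 ∨ A k * D k - B k * C k = -1 := by
    intro k
    induction k with
    | zero => exact hdet
    | succ n ih =>
      have hstep := cfden_det_succ x a b c d n
      rcases ih with h | h
      · right; rw [show A (n+1) * D (n+1) - B (n+1) * C (n+1)
          = -(A n * D n - B n * C n) from hstep, h]
      · left; rw [show A (n+1) * D (n+1) - B (n+1) * C (n+1)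
          = -(A n * D n - B n * C n) from hstep, h]; norm_num
  have hSy : ∀ k, (A k:ℝ) * X k + (B k:ℝ) = y * T k := by
    intro k
    induction k with
    | zero => exact heq
    | succ n ih => rw [hSsucc n, ih, hTsucc n]; ring
  have hTpos : ∀ k, 0 < T k := by
    intro k
    induction k with
    | zero => exact hT0
    | succ n ih => rw [hTsucc n]; exact mul_pos (lt_trans one_pos (hX1 n)) ih
  have hTmono : StrictMono T := by
    apply strictMono_nat_of_lt_succ
    intro n
    rw [hTsucc n]
    nlinarith [hX1 n, hTpos n]
  have hTgrow : ∀ k, 2 * T k < T (k+2) := by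
    intro k
    have h1 := hX1 k; have h2 := hX1 (k+1)
    have hkey := cfShift_mul (X (k+1)) (hXirr (k+1))
    have hsh : cfShift (X (k+1)) = X (k+2) :=
      (Function.iterate_succ_apply' cfShift (k+1) x).symm
    rw [hsh] at hkey
    have hfl' : (1:ℤ) ≤ ⌊X (k+1)⌋ := Int.le_floor.mpr (by push_cast; linarith)
    have hfl : (1:ℝ) ≤ (⌊X (k+1)⌋:ℝ) := by exact_mod_cast hfl'
    have hprod : 2 < X (k+1) * X (k+2) := by
      nlinarith [mul_nonneg (by linarith : (0:ℝ) ≤ (⌊X (k+1)⌋:ℝ) - 1)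
        (by linarith : (0:ℝ) ≤ X (k+2))]
    rw [show k+2 = (k+1)+1 from rfl, hTsucc (k+1), hTsucc k]
    nlinarith [mul_lt_mul_of_pos_right hprod (hTpos k)]
  -- find K with T K > 1
  obtain ⟨K, hK⟩ : ∃ K, 1 < T K := by
    have hgrow2 : ∀ m:ℕ, 2^m * T 0 ≤ T (2*m) := by
      intro m
      induction m with
      | zero => simp
      | succ n ih =>
        have hg := hTgrow (2*n)
        have h2n : 2*(n+1) = 2*n+2 := by ring
        rw [h2n]
        calc 2^(n+1) * T 0 = 2*(2^n * T 0) := by ring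
        _ ≤ 2 * T (2*n) := by linarith
        _ ≤ T (2*n+2) := (hTgrow (2*n)).le
    obtain ⟨mm, hmm⟩ := pow_unbounded_of_one_lt (1 / T 0) (by norm_num : (1:ℝ) < 2)
    refine ⟨2*mm, ?_⟩
    have h0 := hTpos 0
    have h1 : 1 < 2^mm * T 0 := by
      rw [div_lt_iff₀ h0] at hmm; linarith
    linarith [hgrow2 mm]
  have hT1 : ∀ k, K ≤ k → 1 < T k := fun k hk => lt_of_lt_of_le hK (hTmono.monotone hk)
  have hCne : ∀ k, K ≤ k → C k ≠ 0 := by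
    intro k hk h0
    have h1 := hT1 k hk
    have h2 : T k = (C k:ℝ) * X k + (D k:ℝ) := rfl
    rw [h0] at h2
    simp at h2
    have h3 : 1 < (D k:ℝ) := by rw [← h2]; exact h1
    have h4 : 2 ≤ D k := by exact_mod_cast (by exact_mod_cast h3 : (1:ℤ) < D k)
    rcases hdetk k with h | h <;> rw [h0] at h <;> simp at h
    · rcases Int.mul_eq_one_iff_eq_one_or_neg_one.mp h with ⟨_, h5⟩ | ⟨_, h5⟩ <;> omega
    · have h' : (-(A k)) * D k = 1 := by linarith
      rcases Int.mul_eq_one_iff_eq_one_or_neg_one.mp h' with ⟨_, h5⟩ | ⟨_, h5⟩ <;> omega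
  have hF2 : ∀ k, C (k+1) ≤ 0 → 1 ≤ C k := by
    intro k hle
    have h1 := hTpos (k+1)
    have h2 : T (k+1) = (C (k+1):ℝ) * X (k+1) + (D (k+1):ℝ) := rfl
    rw [hDsucc k] at h2
    have h3 : ((C (k+1)):ℝ) ≤ 0 := by exact_mod_cast hle
    have h4 := hX1 k
    have h5 : ((C (k+1)):ℝ) * X (k+1) ≤ 0 :=
      mul_nonpos_of_nonpos_of_nonneg h3 (by linarith)
    have h6 : (0:ℝ) < (C k:ℝ) := by rw [h2] at h1; linarith
    have : (0:ℤ) < C k := by exact_mod_cast h6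
    omega
  -- two consecutive positive denominators exist
  obtain ⟨k, hkK, hCk, hCk1⟩ : ∃ k, K + 1 ≤ k ∧ 1 ≤ C k ∧ 1 ≤ C (k+1) := by
    by_contra hno
    push_neg at hno
    have hstep : ∀ k, K + 1 ≤ k → 1 ≤ C k → (1 ≤ C (k+2) ∧ C (k+2) ≤ C k - 1) := by
      intro k hk h1
      have h2 : C (k+1) ≤ -1 := by
        have ha := hno k hk h1
        have hb := hCne (k+1) (by omega)
        omega
      have h3 : 1 ≤ C (k+2) := by
        by_contra hcon
        push_neg at hcon
        have h33 := hF2 (k+1) (show C (k+2) ≤ 0 by omega)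
        omega
      refine ⟨h3, ?_⟩
      have hflz : (1:ℤ) ≤ ⌊X (k+1)⌋ := Int.le_floor.mpr (by push_cast; linarith [hX1 k])
      have h5 : C (k+1) * ⌊X (k+1)⌋ ≤ C (k+1) * 1 :=
        mul_le_mul_of_nonpos_left hflz (by omega)
      rw [mul_one] at h5
      have h6 := hCsucc (k+1)
      rw [hDsucc k] at h6
      linarith
    have hstart : ∃ k0, K + 1 ≤ k0 ∧ 1 ≤ C k0 := by
      by_cases h : 1 ≤ C (K+1)
      · exact ⟨K+1, le_refl _, h⟩
      · refine ⟨K+2, by omega, ?_⟩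
        push_neg at h
        by_contra hcon
        push_neg at hcon
        have h33 := hF2 (K+1) (show C (K+2) ≤ 0 by omega)
        omega
    obtain ⟨k0, hk0, hc0⟩ := hstart
    have hchain : ∀ m:ℕ, 1 ≤ C (k0 + 2*m) ∧ C (k0 + 2*m) ≤ C k0 - m := by
      intro m
      induction m with
      | zero => constructor <;> simpa using hc0
      | succ n ih =>
        have hs := hstep (k0 + 2*n) (by omega) ih.1
        have he : k0 + 2*(n+1) = (k0 + 2*n) + 2 := by ring
        rw [he]
        refine ⟨hs.1, ?_⟩
        have := ih.2
        push_cast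
        push_cast at this
        linarith [hs.2]
    have hlast := hchain (C k0).toNat
    omega
  -- final index κ = k+1 : all entries nonneg
  have hDk1 : D (k+1) = C k := hDsucc k
  have hTk := hT1 k (by omega)
  have hTk1 := hT1 (k+1) (by omega)
  have hSk1 : (A (k+1):ℝ) * X (k+1) + (B (k+1):ℝ)
      = y * ((C (k+1):ℝ) * X (k+1) + (D (k+1):ℝ)) := hSy (k+1)
  have hTk1e : T (k+1) = (C (k+1):ℝ) * X (k+1) + (D (k+1):ℝ) := rfl
  have hTke : T k = (C k:ℝ) * X k + (D k:ℝ) := rfl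
  have heL : (-1:ℤ) ≤ A (k+1) * D (k+1) - B (k+1) * C (k+1) := by
    rcases hdetk (k+1) with h | h <;> omega
  have heU : A (k+1) * D (k+1) - B (k+1) * C (k+1) ≤ 1 := by
    rcases hdetk (k+1) with h | h <;> omega
  have heLr : (-1:ℝ) ≤ ((A (k+1) * D (k+1) - B (k+1) * C (k+1) : ℤ):ℝ) := by exact_mod_cast heL
  have heUr : ((A (k+1) * D (k+1) - B (k+1) * C (k+1) : ℤ):ℝ) ≤ 1 := by exact_mod_cast heU
  have hCk1r : (1:ℝ) ≤ (C (k+1):ℝ) := by exact_mod_cast hCk1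
  have hDk1r : (1:ℝ) ≤ (D (k+1):ℝ) := by
    rw [hDk1]; exact_mod_cast hCk
  have hid1 : ((C (k+1):ℝ) * y - (A (k+1):ℝ)) * T (k+1)
      = -((A (k+1) * D (k+1) - B (k+1) * C (k+1) : ℤ):ℝ) := by
    rw [hTk1e]; push_cast
    linear_combination (-((C (k+1)):ℝ)) * hSk1
  have hApos : 0 ≤ A (k+1) := by
    by_contra hcon
    push_neg at hcon
    have hA0 : ((A (k+1)):ℝ) ≤ 0 := by exact_mod_cast hcon.le
    have h1 : y ≤ (C (k+1):ℝ) * y - (A (k+1):ℝ) := by nlinarith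
    have h2 : (1:ℝ) < ((C (k+1):ℝ) * y - (A (k+1):ℝ)) * T (k+1) := by
      nlinarith [mul_pos (by linarith : (0:ℝ) < (C (k+1):ℝ) * y - (A (k+1):ℝ) - 1)
        (by linarith : (0:ℝ) < T (k+1) - 1)]
    rw [hid1] at h2
    linarith
  have hid2 : ((D (k+1):ℝ) * y - (B (k+1):ℝ)) * T (k+1)
      = ((A (k+1) * D (k+1) - B (k+1) * C (k+1) : ℤ):ℝ) * X (k+1) := by
    rw [hTk1e]; push_cast
    linear_combination (-((D (k+1)):ℝ)) * hSk1
  have hid2' : ((D (k+1):ℝ) * y - (B (k+1):ℝ)) * T k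
      = ((A (k+1) * D (k+1) - B (k+1) * C (k+1) : ℤ):ℝ) := by
    have hXne : X (k+1) ≠ 0 := by linarith [hX1 k]
    apply mul_right_cancel₀ hXne
    linear_combination hid2 - ((D (k+1):ℝ) * y - (B (k+1):ℝ)) * (hTsucc k)
  have hBpos : 0 ≤ B (k+1) := by
    by_contra hcon
    push_neg at hcon
    have hB0 : ((B (k+1)):ℝ) ≤ -1 := by exact_mod_cast (by omega : B (k+1) ≤ -1)
    have h1 : y + 1 ≤ (D (k+1):ℝ) * y - (B (k+1):ℝ) := by nlinarith
    have h2 : (1:ℝ) < ((D (k+1):ℝ) * y - (B (k+1):ℝ)) * T k := by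
      nlinarith [mul_pos (by linarith : (0:ℝ) < (D (k+1):ℝ) * y - (B (k+1):ℝ) - 1)
        (by linarith : (0:ℝ) < T k - 1)]
    rw [hid2'] at h2
    linarith
  -- apply lemA
  have hsumnn : (0:ℤ) ≤ 2*(A (k+1) + B (k+1) + C (k+1) + D (k+1)) := by omega
  obtain ⟨nn, hnncast⟩ : ∃ nn : ℕ, (nn:ℤ) = 2*(A (k+1) + B (k+1) + C (k+1) + D (k+1)) + 1 :=
    ⟨(2*(A (k+1) + B (k+1) + C (k+1) + D (k+1))).toNat + 1, by
      push_cast [Int.toNat_of_nonneg hsumnn]; ring⟩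
  have hmeasA : 2*(A (k+1) + B (k+1) + C (k+1) + D (k+1)) + (if y < 1 then 1 else 0)
      ≤ (nn:ℤ) := by
    rw [if_neg (not_lt.mpr hy1.le), hnncast]; omega
  obtain ⟨i, j, hij⟩ := lemA nn (A (k+1)) (B (k+1)) (C (k+1)) (D (k+1)) (X (k+1)) y
    (hXirr (k+1)) (hX1 k) hy hApos hBpos (by omega) (by omega)
    (by rintro ⟨h1, _⟩; omega) (hdetk (k+1)) hSk1 hmeasA
  refine ⟨i + (k+1), j, ?_⟩
  rw [Function.iterate_add_apply]
  exact hij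

theorem equivalent_implies_common_tail (x y : ℝ) (hx : Irrational x) (hy : Irrational y)
    (a b c d : ℤ) (hdet : a * d - b * c = 1 ∨ a * d - b * c = -1)
    (h : ((a : ℝ) * x + b) / ((c : ℝ) * x + d) = y) :
    ∃ i j : ℕ, cfShift^[i] x = cfShift^[j] y := by
  have hdnz : (c:ℝ) * x + d ≠ 0 := by
    by_cases hc0 : c = 0
    · have hd0 : d ≠ 0 := by
        intro hd0; rw [hc0, hd0] at hdet; simp at hdet
      simp only [hc0, Int.cast_zero, zero_mul, zero_add]
      exact_mod_cast hd0
    · intro h0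
      have hcr : (c:ℝ) ≠ 0 := Int.cast_ne_zero.mpr hc0
      apply hx
      refine ⟨(-d : ℚ)/(c : ℚ), ?_⟩
      push_cast
      field_simp
      linarith
  rw [div_eq_iff hdnz] at h
  -- pre-shift y so that target is > 1
  set m : ℤ := ⌊y⌋ with hm
  have hy1 : Irrational (cfShift y) := cfShift_irrational y hy
  have hy1gt : 1 < cfShift y := one_lt_cfShift y hy
  have hkey : (y - (m:ℝ)) * cfShift y = 1 := cfShift_mul y hy
  have hdet1 : c*(b - m*d) - d*(a - m*c) = 1 ∨ c*(b - m*d) - d*(a - m*c) = -1 := by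
    have hr : c*(b - m*d) - d*(a - m*c) = -(a*d - b*c) := by ring
    rcases hdet with hh | hh
    · right; rw [hr, hh]
    · left; rw [hr, hh]; norm_num
  have heq1 : (c:ℝ)*x + d = cfShift y * (((a - m*c : ℤ):ℝ)*x + ((b - m*d : ℤ):ℝ)) := by
    push_cast
    linear_combination (-(((c:ℝ)*x + d))) * hkey - (cfShift y) * h
  have ht1ne : ((a - m*c : ℤ):ℝ)*x + ((b - m*d : ℤ):ℝ) ≠ 0 := by
    intro h0
    rw [h0, mul_zero] at heq1
    exact hdnz heq1
  rcases ht1ne.lt_or_gt with hneg | hpos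
  · -- negate everything
    have hdet2 : (-c)*(-(b - m*d)) - (-d)*(-(a - m*c)) = 1 ∨
        (-c)*(-(b - m*d)) - (-d)*(-(a - m*c)) = -1 := by
      rcases hdet1 with hh | hh
      · left; linarith [hh]
      · right; linarith [hh]
    have hpos2 : (0:ℝ) < ((-(a - m*c) : ℤ):ℝ)*x + ((-(b - m*d) : ℤ):ℝ) := by
      push_cast; push_cast at hneg; linarith
    have heq2 : ((-c : ℤ):ℝ)*x + ((-d : ℤ):ℝ)
        = cfShift y * (((-(a - m*c) : ℤ):ℝ)*x + ((-(b - m*d) : ℤ):ℝ)) := by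
      push_cast; push_cast at heq1; linarith
    obtain ⟨i, j, hij⟩ := main' x (cfShift y) hx hy1 hy1gt (-c) (-d) (-(a - m*c)) (-(b - m*d))
      hdet2 hpos2 heq2
    exact ⟨i, j+1, by rw [hij, Function.iterate_succ_apply]⟩
  · obtain ⟨i, j, hij⟩ := main' x (cfShift y) hx hy1 hy1gt c d (a - m*c) (b - m*d)
      hdet1 hpos heq1
    exact ⟨i, j+1, by rw [hij, Function.iterate_succ_apply]⟩
end

section
/- Conversely, if x and y are irrational reals whose derivative sequences satisfy x_i = y_j for some nonnegative integers i, j, then there is M ∈ GL(2,ℤ) with M·x = y; explicitly M = g_{y₀}·g_{y₁}·…·g_{y_{j-1}}·(g_{x₀}·g_{x₁}·…·g_{x_{i-1}})⁻¹, where g_z := [[⌊z⌋,1],[1,0]]. -/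
/-- The matrix `g_z = [[⌊z⌋, 1], [1, 0]]`. -/
noncomputable def gMat (z : ℝ) : Matrix (Fin 2) (Fin 2) ℤ := !![⌊z⌋, 1; 1, 0]

/-- Product `g_{x₀} · g_{x₁} · … · g_{x_{i-1}}` along the derivative sequence of `x`. -/
noncomputable def gProd (x : ℝ) (i : ℕ) : Matrix (Fin 2) (Fin 2) ℤ :=
  ((List.range i).map fun k => gMat (cfShift^[k] x)).prod

noncomputable def mob (A : Matrix (Fin 2) (Fin 2) ℤ) (x : ℝ) : ℝ :=
  ((A 0 0 : ℝ) * x + A 0 1) / ((A 1 0 : ℝ) * x + A 1 1)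

lemma irr_shift {x : ℝ} (hx : Irrational x) : Irrational (cfShift x) := by
  have h1 : Irrational (x - (⌊x⌋ : ℤ)) := Irrational.sub_intCast hx _
  have := h1.inv
  simpa [cfShift, one_div] using this

lemma irr_iter {x : ℝ} (hx : Irrational x) (k : ℕ) : Irrational (cfShift^[k] x) := by
  induction k with
  | zero => simpa using hx
  | succ n ih => rw [Function.iterate_succ_apply']; exact irr_shift ih

lemma det_gMat (z : ℝ) : (gMat z).det = -1 := by
  simp [gMat, Matrix.det_fin_two_of]

lemma denom_ne_zero {A : Matrix (Fin 2) (Fin 2) ℤ} (hA : A.det ≠ 0) {x : ℝ}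
    (hx : Irrational x) : (A 1 0 : ℝ) * x + A 1 1 ≠ 0 := by
  rcases eq_or_ne (A 1 0) 0 with h0 | h0
  · have h1 : A 1 1 ≠ 0 := by
      intro h1
      apply hA
      rw [Matrix.det_fin_two, h0, h1]; ring
    simp [h0]
    exact_mod_cast h1
  · intro hc
    apply hx.ne_rat (-(A 1 1 : ℚ) / (A 1 0 : ℚ))
    have hA10 : (A 1 0 : ℝ) ≠ 0 := Int.cast_ne_zero.mpr h0
    push_cast
    field_simp
    linarith [hc]

lemma mob_mul {A B : Matrix (Fin 2) (Fin 2) ℤ} (hA : A.det ≠ 0) (hB : B.det ≠ 0)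
    {x : ℝ} (hx : Irrational x) : mob (A * B) x = mob A (mob B x) := by
  have hAB : (A * B).det ≠ 0 := by
    rw [Matrix.det_mul]; exact mul_ne_zero hA hB
  have hdB : (B 1 0 : ℝ) * x + B 1 1 ≠ 0 := denom_ne_zero hB hx
  have hdAB : ((A * B) 1 0 : ℝ) * x + (A * B) 1 1 ≠ 0 := denom_ne_zero hAB hx
  have hent : ∀ i k : Fin 2, ((A * B) i k : ℝ) = (A i 0 : ℝ) * B 0 k + (A i 1 : ℝ) * B 1 k := by
    intro i k
    rw [Matrix.mul_apply, Fin.sum_univ_two]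
    push_cast; ring
  have hdAB' : (A 1 0 : ℝ) * mob B x + A 1 1 ≠ 0 := by
    intro hc
    apply hdAB
    rw [hent, hent]
    unfold mob at hc
    have hdB' : x * (B 1 0 : ℝ) + B 1 1 ≠ 0 := by rwa [mul_comm] at hdB
    field_simp at hc
    linarith [hc]
  unfold mob
  rw [hent 0 0, hent 0 1, hent 1 0, hent 1 1]
  rw [div_eq_div_iff]
  · field_simp
    ring
  · rw [← hent, ← hent]; exact hdAB
  · unfold mob at hdAB'
    intro hc
    apply hdAB'
    field_simp at hc ⊢
    linarith [hc]

lemma mob_gMat {z : ℝ} (hz : Irrational z) : mob (gMat z) (cfShift z) = z := by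
  have h1 : z - (⌊z⌋ : ℤ) ≠ 0 := by
    intro hc
    exact (Irrational.sub_intCast hz ⌊z⌋).ne_int 0 (by exact_mod_cast hc)
  simp only [mob, gMat, cfShift, Matrix.cons_val', Matrix.cons_val_zero, Matrix.cons_val_one,
    Matrix.head_cons, Matrix.empty_val', Matrix.cons_val_fin_one, Matrix.head_fin_const]
  have h2 : Int.fract z ≠ 0 := by rwa [Int.fract]
  field_simp
  simp
lemma det_gProd (x : ℝ) (i : ℕ) : (gProd x i).det = (-1) ^ i := by
  induction i with
  | zero => simp [gProd]
  | succ n ih =>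
      have : gProd x (n + 1) = gProd x n * gMat (cfShift^[n] x) := by
        simp [gProd, List.range_succ]
      rw [this, Matrix.det_mul, ih, det_gMat, pow_succ]

lemma mob_gProd {x : ℝ} (hx : Irrational x) (i : ℕ) : mob (gProd x i) (cfShift^[i] x) = x := by
  induction i with
  | zero =>
      simp [gProd, mob, Matrix.one_apply]
  | succ n ih =>
      have hstep : gProd x (n + 1) = gProd x n * gMat (cfShift^[n] x) := by
        simp [gProd, List.range_succ]
      have hdA : (gProd x n).det ≠ 0 := by
        rw [det_gProd]; exact pow_ne_zero _ (by norm_num)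
      have hdB : (gMat (cfShift^[n] x)).det ≠ 0 := by rw [det_gMat]; norm_num
      rw [hstep, Function.iterate_succ_apply',
        mob_mul hdA hdB (irr_shift (irr_iter hx n)),
        mob_gMat (irr_iter hx n), ih]

theorem common_tail_implies_equivalent (x y : ℝ) (hx : Irrational x) (hy : Irrational y)
    (i j : ℕ) (h : cfShift^[i] x = cfShift^[j] y) :
    ∃ M : Matrix (Fin 2) (Fin 2) ℤ,
      (M.det = 1 ∨ M.det = -1) ∧
      M * gProd x i = gProd y j ∧
      ((M 0 0 : ℝ) * x + M 0 1) / ((M 1 0 : ℝ) * x + M 1 1) = y := by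
  have hux : IsUnit (gProd x i).det := by
    rw [det_gProd]; exact (isUnit_one.neg).pow _
  refine ⟨gProd y j * (gProd x i)⁻¹, ?_, ?_, ?_⟩
  case refine_2 =>
    rw [mul_assoc, Matrix.nonsing_inv_mul _ hux, mul_one]
  case refine_1 =>
    have hM : (gProd y j * (gProd x i)⁻¹ * gProd x i).det = (gProd y j).det := by
      rw [mul_assoc, Matrix.nonsing_inv_mul _ hux, mul_one]
    rw [Matrix.det_mul, det_gProd] at hM
    rw [det_gProd] at hM
    rcases Nat.even_or_odd i with hi | hi <;> rcases Nat.even_or_odd j with hj | hj <;>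
      simp only [hi.neg_one_pow, hj.neg_one_pow, mul_one, mul_neg_one] at hM <;> omega
  case refine_3 =>
    set M := gProd y j * (gProd x i)⁻¹ with hMdef
    have hMeq : M * gProd x i = gProd y j := by
      rw [hMdef, mul_assoc, Matrix.nonsing_inv_mul _ hux, mul_one]
    have hdx : (gProd x i).det ≠ 0 := by
      rw [det_gProd]; exact pow_ne_zero _ (by norm_num)
    have hdy : (gProd y j).det ≠ 0 := by
      rw [det_gProd]; exact pow_ne_zero _ (by norm_num)
    have hdM : M.det ≠ 0 := by
      intro hc
      have : (M * gProd x i).det = 0 := by rw [Matrix.det_mul, hc, zero_mul]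
      rw [hMeq] at this; exact hdy this
    have hirr : Irrational (cfShift^[i] x) := irr_iter hx i
    have key : mob M x = y := by
      have h1 : mob (M * gProd x i) (cfShift^[i] x) = mob M (mob (gProd x i) (cfShift^[i] x)) :=
        mob_mul hdM hdx hirr
      rw [hMeq, mob_gProd hx i, h, mob_gProd hy j] at h1
      exact h1.symm
    exact key
end

section
/- Let Δ be a positive nonsquare integer. For every x ∈ I_Δ, the derivative x' := 1/(x - ⌊x⌋) also lies in I_Δ. -/
def MemIDelta (Δ : ℤ) (x : ℝ) : Prop :=
  ∃ a b c : ℤ, a ≠ 0 ∧ b ^ 2 - a * c = Δ ∧ x = (-b - Real.sqrt Δ) / a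

theorem IDelta_closed_under_derivative (Δ : ℤ) (hΔpos : 0 < Δ) (hΔns : ¬ IsSquare Δ)
    (x : ℝ) (hx : MemIDelta Δ x) :
    MemIDelta Δ (1 / (x - ⌊x⌋)) := by
  obtain ⟨a, b, c, ha, hD, hxe⟩ := hx
  set n : ℤ := ⌊x⌋ with hn
  set B : ℤ := b + n * a with hB
  set c' : ℤ := n ^ 2 * a + 2 * n * b + c with hc'
  have hac' : a * c' = B ^ 2 - Δ := by
    rw [hB, hc']; linear_combination -hD
  have hs : Real.sqrt Δ ^ 2 = (Δ : ℝ) := Real.sq_sqrt (by exact_mod_cast hΔpos.le)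
  have hBΔ : B ^ 2 ≠ Δ := by
    intro h
    exact hΔns ⟨B, by linarith [sq B ▸ h]⟩
  have hc'0 : c' ≠ 0 := by
    intro h
    apply hBΔ
    have := hac'
    rw [h, mul_zero] at this
    linarith
  have haR : (a : ℝ) ≠ 0 := Int.cast_ne_zero.mpr ha
  have hc'R : (c' : ℝ) ≠ 0 := Int.cast_ne_zero.mpr hc'0
  have hden : (-(B : ℝ) - Real.sqrt Δ) ≠ 0 := by
    intro h
    apply hBΔ
    have hsB : Real.sqrt Δ = -(B : ℝ) := by linarith
    have : ((B : ℝ)) ^ 2 = (Δ : ℝ) := by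
      rw [← hs, hsB]; ring
    exact_mod_cast this
  have hxn : x - n = (-(B : ℝ) - Real.sqrt Δ) / a := by
    rw [hxe, hB]
    push_cast
    field_simp
    ring
  refine ⟨-c', -B, -a, neg_ne_zero.mpr hc'0, by linear_combination hD, ?_⟩
  rw [hxn]
  rw [div_div_eq_mul_div, one_mul]
  rw [div_eq_div_iff hden (by exact_mod_cast neg_ne_zero.mpr hc'0 : ((-c' : ℤ) : ℝ) ≠ 0)]
  push_cast
  have hac'R : (a : ℝ) * c' = (B : ℝ) ^ 2 - Δ := by exact_mod_cast hac'
  nlinarith [hs, hac'R]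
end
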